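/- arXiv:1303.2536 — 3 statements merged into one kernel-verified Lean document; each statement's English description precedes it below -/
import Mathlib

section
/- Let n ≥ 1, m ≥ 0 and 𝔞 ∈ A_n(m). Then ω(τ𝔞) = τ(ω(𝔞)), where τ acts on tuples of the appropriate length by reversal. -/
/- Common definitions following K. O'Hara's spread/degree and the signature
   refinement; elements of A_n(m) are lists of naturals of length n+1 and sum m. -/

namespace OHara

/-- The spread of `a = (a_0, …, a_n)`: the maximum of `a_i + a_{i+1}` over `0 ≤ i ≤ n-1`
(`0` if the list has length ≤ 1). -/
def sprL (a : List ℕ) : ℕ :=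
  (Finset.range (a.length - 1)).sup (fun i => a.getD i 0 + a.getD (i + 1) 0)

/-- `M(a)`: the set of left indices of maximal pairs. -/
def Mset (a : List ℕ) : Finset ℕ :=
  (Finset.range (a.length - 1)).filter (fun i => a.getD i 0 + a.getD (i + 1) 0 = sprL a)

/-- The connected component (maximal interval of consecutive integers) of `i` inside `S`. -/
def compF (S : Finset ℕ) (i : ℕ) : Finset ℕ :=
  S.filter (fun j => Finset.Icc (min i j) (max i j) ⊆ S)

/-- The left endpoints of the maximal intervals of consecutive integers of `S`. -/
def leftEnds (S : Finset ℕ) : Finset ℕ :=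
  S.filter (fun i => i = 0 ∨ (i - 1) ∉ S)

/-- O'Hara's degree: the sum over the maximal intervals `D` of `M(a)` of `⌈|D|/2⌉`. -/
def ecdL (a : List ℕ) : ℕ :=
  ∑ i ∈ leftEnds (Mset a), ((compF (Mset a) i).card + 1) / 2

/-- The set of active indices `Act(a) = M(a) ∪ (1 + M(a))`. -/
def ActF (a : List ℕ) : Finset ℕ :=
  Mset a ∪ (Mset a).image (· + 1)

/-- An index `j` survives in `ω(a)` iff it is not active, or it is the left endpoint `c` of a
maximal interval `D = [c, c+d]` of `M(a)` with `d` odd (i.e. `|D|` even). -/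
def survivesB (a : List ℕ) (j : ℕ) : Bool :=
  decide (j ∉ ActF a ∨ (j ∈ leftEnds (Mset a) ∧ Even (compF (Mset a) j).card))

/-- `ω(a)`: the result of removing from `a` the largest possible number of maximal pairs. -/
def omegaL (a : List ℕ) : List ℕ :=
  ((List.range a.length).filter (fun j => survivesB a j)).map (fun j => a.getD j 0)

/-- Fuel-driven recursion computing the signature (the fuel `a.length` in `sigmaL`
always suffices, since `ω` shortens a list of length ≥ 3 by at least 2). -/
def sigmaAux : ℕ → List ℕ → List ℕ
  | _, [] => []
  | 0, a => [a.sum]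
  | fuel + 1, a =>
    if a.length ≤ 2 then [a.sum]
    else List.replicate (ecdL a - 1) 0 ++ [sprL a - sprL (omegaL a)] ++ sigmaAux fuel (omegaL a)

/-- The signature `σ(a)`. -/
def sigmaL (a : List ℕ) : List ℕ := sigmaAux a.length a

/-- `m = Σ_{j=0}^k (j+1)·d_j` determined by a signature `(d_0, …, d_k)`. -/
def mOf (ds : List ℕ) : ℕ := ∑ j ∈ Finset.range ds.length, (j + 1) * ds.getD j 0

/-- `Q_n(d_0, …, d_k)`: the set of elements of `A_n(m)` of signature `(d_0, …, d_k)`. -/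
def Qset (n : ℕ) (ds : List ℕ) : Set (List ℕ) :=
  {a | a.length = n + 1 ∧ a.sum = mOf ds ∧ sigmaL a = ds}

/-- The rank `rk(a) = Σ i·a_i`. -/
def rkL (a : List ℕ) : ℕ := ∑ i ∈ Finset.range a.length, i * a.getD i 0

/-- `b` covers `a` in `A_n(m)`: `b` is obtained from `a` by replacing some consecutive pair
`(a_i, a_{i+1})` by `(a_i - 1, a_{i+1} + 1)`. -/
def coversL (b a : List ℕ) : Prop :=
  ∃ i, i + 1 < a.length ∧ 0 < a.getD i 0 ∧
    b = (a.set i (a.getD i 0 - 1)).set (i + 1) (a.getD (i + 1) 0 + 1)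

/-- Normalization phase of the raising algorithm: starting at index `i ∈ M(a)`, repeatedly
replace `i` by `i - 1` as long as `i ≥ 1` and `a_{i+1} = a_{i-1}`. -/
def rnormIdx (a : List ℕ) : ℕ → ℕ
  | 0 => 0
  | i + 1 => if a.getD (i + 2) 0 = a.getD i 0 then rnormIdx a i else i + 1

/-- One move of the raising algorithm from `(a, i)` with `i ∈ M(a)`: after normalizing the
index, either halt (`none`, at an initial element) or perform one step. -/
def raiseMove (a : List ℕ) (i : ℕ) : Option (List ℕ × ℕ) :=
  let j := rnormIdx a i
  if a.getD (j + 1) 0 = 0 then none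
  else some ((a.set j (a.getD j 0 + 1)).set (j + 1) (a.getD (j + 1) 0 - 1), j)

/-- The list of elements produced by iterating the raising algorithm (including the start). -/
def raiseList : ℕ → List ℕ → ℕ → List (List ℕ)
  | 0, a, _ => [a]
  | fuel + 1, a, i =>
    match raiseMove a i with
    | none => [a]
    | some (a', j) => a :: raiseList fuel a' j

/-- Normalization phase of the lowering algorithm: starting at index `i ∈ M(a)`, repeatedly
replace `i` by `i + 1` as long as `i ≤ n - 2` and `a_i = a_{i+2}` (fuel-driven). -/
def lnormIdx (a : List ℕ) : ℕ → ℕ → ℕ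
  | 0, i => i
  | fuel + 1, i =>
    if i + 2 < a.length ∧ a.getD i 0 = a.getD (i + 2) 0 then lnormIdx a fuel (i + 1) else i

/-- One move of the lowering algorithm from `(a, i)` with `i ∈ M(a)`: after normalizing the
index, either halt (`none`, at a terminal element) or perform one step. -/
def lowerMove (a : List ℕ) (i : ℕ) : Option (List ℕ × ℕ) :=
  let j := lnormIdx a a.length i
  if a.getD j 0 = 0 then none
  else some ((a.set j (a.getD j 0 - 1)).set (j + 1) (a.getD (j + 1) 0 + 1), j)

/-- The list of elements produced by iterating the lowering algorithm (including the start). -/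
def lowerList : ℕ → List ℕ → ℕ → List (List ℕ)
  | 0, a, _ => [a]
  | fuel + 1, a, i =>
    match lowerMove a i with
    | none => [a]
    | some (a', j) => a :: lowerList fuel a' j

/-- The colors of the successive covering relations produced by the lowering algorithm:
a lowering step at index `j` replaces `(a_j, a_{j+1})` by `(a_j - 1, a_{j+1} + 1)` and has
color `j + 1`. -/
def lowerColors : ℕ → List ℕ → ℕ → List ℕ
  | 0, _, _ => []
  | fuel + 1, a, i =>
    match lowerMove a i with
    | none => []
    | some (a', j) => (j + 1) :: lowerColors fuel a' j

/-- The transversal chain `T_i(a)`: the elements obtained from `a` by the raising algorithm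
together with those obtained by the lowering algorithm, both started at index `i ∈ M(a)`.
(The fuels `rk(a)` and `a.length * a.sum` are always sufficient, since each raising move
decreases the rank by 1 and each lowering move increases it by 1, within `[0, n·m]`.) -/
def Tset (a : List ℕ) (i : ℕ) : Set (List ℕ) :=
  {x | x ∈ raiseList (rkL a) a i ∨ x ∈ lowerList (a.length * a.sum) a i}

end OHara

namespace OHara
open Finset

theorem filter_eq_map_filter (L : ℕ) (p q : ℕ → Bool) (f : ℕ → ℕ)
    (h1 : ∀ j, p j = true → q (f j) = true ∧ j ≤ f j)
    (h4 : ∀ j, j < L → p j = true → f j < L)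
    (h3 : ∀ j j', p j = true → p j' = true → j < j' → f j < f j')
    (h2 : ∀ j, q j = true → ∃ j', p j' = true ∧ f j' = j) :
    (List.range L).filter q = ((List.range L).filter p).map f := by
  haveI : Std.Antisymm (α := ℕ) (· < ·) := ⟨fun a b h h' => absurd h' (lt_asymm h)⟩
  have hsortedL : ((List.range L).filter q).Pairwise (· < ·) :=
    (List.sortedLT_range L).pairwise.filter _
  have hmemp : ∀ x ∈ (List.range L).filter p, p x = true := fun x hx =>
    (List.mem_filter.mp hx).2
  have hsortp : ((List.range L).filter p).Pairwise (· < ·) :=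
    (List.sortedLT_range L).pairwise.filter _
  have hsortedR : (((List.range L).filter p).map f).Pairwise (· < ·) := by
    rw [List.pairwise_map]
    exact hsortp.imp_of_mem (fun ha hb hab => h3 _ _ (hmemp _ ha) (hmemp _ hb) hab)
  refine List.Perm.eq_of_pairwise' hsortedL hsortedR ?_
  refine List.perm_of_nodup_nodup_toFinset_eq hsortedL.nodup hsortedR.nodup ?_
  ext x
  simp only [List.mem_toFinset, List.mem_filter, List.mem_map, List.mem_range]
  constructor
  · rintro ⟨hxL, hqx⟩
    obtain ⟨j', hpj', hfj'⟩ := h2 x hqx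
    exact ⟨j', ⟨lt_of_le_of_lt ((h1 j' hpj').2.trans_eq hfj') hxL, hpj'⟩, hfj'⟩
  · rintro ⟨j, ⟨hjL, hpj⟩, rfl⟩
    exact ⟨h4 j hjL hpj, (h1 j hpj).1⟩

/-- Right endpoints of maximal intervals. -/
def rightEnds (S : Finset ℕ) : Finset ℕ := S.filter (fun i => (i + 1) ∉ S)

theorem mem_compF {S : Finset ℕ} {j k : ℕ} :
    k ∈ compF S j ↔ k ∈ S ∧ Icc (min j k) (max j k) ⊆ S := by
  simp [compF]

theorem self_mem_compF {S : Finset ℕ} {j : ℕ} (h : j ∈ S) : j ∈ compF S j := by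
  rw [mem_compF]
  exact ⟨h, by simp [h]⟩

theorem compF_subset {S : Finset ℕ} {j : ℕ} : compF S j ⊆ S := filter_subset _ _

theorem compF_eq_of_mem {S : Finset ℕ} {j k : ℕ} (h : k ∈ compF S j) :
    compF S k = compF S j := by
  rw [mem_compF] at h
  obtain ⟨hkS, hjk⟩ := h
  ext x
  rw [mem_compF, mem_compF]
  constructor
  · rintro ⟨hxS, hkx⟩
    refine ⟨hxS, fun t ht => ?_⟩
    rw [mem_Icc] at ht
    have : (min j k ≤ t ∧ t ≤ max j k) ∨ (min k x ≤ t ∧ t ≤ max k x) := by omega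
    rcases this with h' | h'
    · exact hjk (mem_Icc.mpr h')
    · exact hkx (mem_Icc.mpr h')
  · rintro ⟨hxS, hjx⟩
    refine ⟨hxS, fun t ht => ?_⟩
    rw [mem_Icc] at ht
    have : (min j k ≤ t ∧ t ≤ max j k) ∨ (min j x ≤ t ∧ t ≤ max j x) := by omega
    rcases this with h' | h'
    · exact hjk (mem_Icc.mpr h')
    · exact hjx (mem_Icc.mpr h')

/-- Structure of the component of a left endpoint. -/
theorem compF_of_leftEnd {S : Finset ℕ} {j : ℕ} (hj : j ∈ leftEnds S) :
    compF S j = Icc j ((compF S j).sup id) ∧ j ≤ (compF S j).sup id ∧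
      ((compF S j).sup id) + 1 ∉ S ∧ Icc j ((compF S j).sup id) ⊆ S := by
  rw [leftEnds, mem_filter] at hj
  obtain ⟨hjS, hjl⟩ := hj
  have hjc : j ∈ compF S j := self_mem_compF hjS
  set r := (compF S j).sup id with hr
  have hjr : j ≤ r := le_sup (f := id) hjc
  obtain ⟨x, hx, hxr⟩ := Finset.exists_mem_eq_sup (compF S j) ⟨j, hjc⟩ id
  have hrc : r ∈ compF S j := by rw [hr, hxr]; exact hx
  have hIcc : Icc j r ⊆ S := by
    have := (mem_compF.mp hrc).2
    rwa [min_eq_left hjr, max_eq_right hjr] at this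
  have hr1 : r + 1 ∉ S := by
    intro hmem
    have : r + 1 ∈ compF S j := by
      rw [mem_compF, min_eq_left (by omega), max_eq_right (by omega)]
      refine ⟨hmem, fun t ht => ?_⟩
      rw [mem_Icc] at ht
      rcases Nat.lt_or_ge t (r + 1) with h' | h'
      · exact hIcc (mem_Icc.mpr ⟨ht.1, by omega⟩)
      · have : t = r + 1 := by omega
        rwa [this]
    have := le_sup (f := id) this
    simp only [id_eq, ← hr] at this
    omega
  refine ⟨?_, hjr, hr1, hIcc⟩
  ext x
  rw [mem_compF, mem_Icc]
  constructor
  · rintro ⟨hxS, hjx⟩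
    have hxr : x ≤ r := le_sup (f := id) (mem_compF.mpr ⟨hxS, hjx⟩)
    refine ⟨?_, hxr⟩
    by_contra hxj
    push_neg at hxj
    have hj1 : j - 1 ∈ Icc (min j x) (max j x) := by
      rw [mem_Icc]; omega
    have := hjx hj1
    rcases hjl with h0 | h0
    · omega
    · exact h0 this
  · rintro ⟨hjx, hxr⟩
    refine ⟨hIcc (mem_Icc.mpr ⟨hjx, hxr⟩), fun t ht => ?_⟩
    rw [mem_Icc, min_eq_left hjx, max_eq_right hjx] at ht
    exact hIcc (mem_Icc.mpr ⟨ht.1, ht.2.trans hxr⟩)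

/-- Structure of the component of a right endpoint. -/
theorem compF_of_rightEnd {S : Finset ℕ} {r : ℕ} (hr : r ∈ rightEnds S) :
    (compF S r).min' ⟨r, self_mem_compF (mem_filter.mp hr).1⟩ ∈ leftEnds S ∧
    compF S ((compF S r).min' ⟨r, self_mem_compF (mem_filter.mp hr).1⟩) = compF S r ∧
    (compF S r).sup id = r := by
  rw [rightEnds, mem_filter] at hr
  obtain ⟨hrS, hr1⟩ := hr
  have hrc : r ∈ compF S r := self_mem_compF hrS
  set c := (compF S r).min' ⟨r, hrc⟩ with hc
  have hcc : c ∈ compF S r := Finset.min'_mem _ _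
  have hcr : c ≤ r := Finset.min'_le _ _ hrc
  have hIcc : Icc c r ⊆ S := by
    have := (mem_compF.mp hcc).2
    rwa [min_eq_right hcr, max_eq_left hcr] at this
  have hsup : (compF S r).sup id = r := by
    obtain ⟨x, hx, hxr⟩ := Finset.exists_mem_eq_sup (compF S r) ⟨r, hrc⟩ id
    have hxlr : x ≤ r := by
      by_contra hgt
      push_neg at hgt
      have := (mem_compF.mp hx).2
      rw [min_eq_left (by omega), max_eq_right (by omega)] at this
      exact hr1 (this (mem_Icc.mpr ⟨by omega, by omega⟩))
    have : r ≤ (compF S r).sup id := le_sup (f := id) hrc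
    simp only [id_eq] at hxr
    omega
  refine ⟨?_, compF_eq_of_mem hcc, hsup⟩
  rw [leftEnds, mem_filter]
  refine ⟨compF_subset hcc, ?_⟩
  by_cases hc0 : c = 0
  · exact Or.inl hc0
  · refine Or.inr fun hmem => ?_
    have : c - 1 ∈ compF S r := by
      rw [mem_compF, min_eq_right (by omega), max_eq_left (by omega)]
      refine ⟨hmem, fun t ht => ?_⟩
      rw [mem_Icc] at ht
      rcases Nat.eq_or_lt_of_le ht.1 with h' | h'
      · rw [← h']; exact hmem
      · exact hIcc (mem_Icc.mpr ⟨by omega, ht.2⟩)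
    have := Finset.min'_le _ _ this
    omega

end OHara
namespace OHara
open Finset

/-- Right-endpoint variant of the survival predicate. -/
def survRB (a : List ℕ) (k : ℕ) : Bool :=
  decide (k ∉ ActF a ∨ (1 ≤ k ∧ (k - 1) ∈ rightEnds (Mset a) ∧
    Even (compF (Mset a) (k - 1)).card))

/-- The map sending a left survivor to the corresponding right survivor. -/
def fmap (a : List ℕ) (j : ℕ) : ℕ :=
  if j ∈ leftEnds (Mset a) ∧ Even (compF (Mset a) j).card then
    (compF (Mset a) j).sup id + 1 else j

theorem mem_Mset {a : List ℕ} {i : ℕ} :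
    i ∈ Mset a ↔ i < a.length - 1 ∧ a.getD i 0 + a.getD (i + 1) 0 = sprL a := by
  simp [Mset]

theorem leftEnds_subset {S : Finset ℕ} : leftEnds S ⊆ S := filter_subset _ _

theorem Mset_subset_Act {a : List ℕ} : Mset a ⊆ ActF a := subset_union_left

theorem mem_Act_iff {a : List ℕ} {j : ℕ} :
    j ∈ ActF a ↔ j ∈ Mset a ∨ (1 ≤ j ∧ j - 1 ∈ Mset a) := by
  simp only [ActF, mem_union, mem_image]
  constructor
  · rintro (h | ⟨i, hi, rfl⟩)
    · exact Or.inl h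
    · exact Or.inr ⟨by omega, by simpa using hi⟩
  · rintro (h | ⟨h1, h2⟩)
    · exact Or.inl h
    · exact Or.inr ⟨j - 1, h2, by omega⟩

theorem alt_val (a : List ℕ) (s : ℕ) :
    ∀ (d c : ℕ), (∀ i, c ≤ i → i < c + 2 * d → a.getD i 0 + a.getD (i + 1) 0 = s) →
      a.getD (c + 2 * d) 0 = a.getD c 0
  | 0, c, _ => by simp
  | d + 1, c, h => by
    have h1 := h c (le_refl c) (by omega)
    have h2 : a.getD (c + 1) 0 + a.getD (c + 2) 0 = s := h (c + 1) (by omega) (by omega)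
    have ih := alt_val a s d (c + 2) (fun i hi1 hi2 => h i (by omega) (by omega))
    have hc : c + 2 * (d + 1) = (c + 2) + 2 * d := by omega
    rw [hc, ih]
    omega

theorem fmap_of_notAct {a : List ℕ} {j : ℕ} (h : j ∉ ActF a) : fmap a j = j := by
  rw [fmap, if_neg]
  rintro ⟨hl, -⟩
  exact h (Mset_subset_Act (leftEnds_subset hl))

theorem survivesB_iff {a : List ℕ} {j : ℕ} : survivesB a j = true ↔
    (j ∉ ActF a ∨ (j ∈ leftEnds (Mset a) ∧ Even (compF (Mset a) j).card)) := by
  simp [survivesB]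

theorem survRB_iff {a : List ℕ} {k : ℕ} : survRB a k = true ↔
    (k ∉ ActF a ∨ (1 ≤ k ∧ (k - 1) ∈ rightEnds (Mset a) ∧
      Even (compF (Mset a) (k - 1)).card)) := by
  simp [survRB]

theorem omega_eq_right (a : List ℕ) :
    omegaL a =
      ((List.range a.length).filter (fun j => survRB a j)).map (fun j => a.getD j 0) := by
  have key : ∀ j, j ∈ leftEnds (Mset a) → Even (compF (Mset a) j).card →
      survRB a (fmap a j) = true ∧ fmap a j = (compF (Mset a) j).sup id + 1 ∧
        j ≤ fmap a j ∧ a.getD (fmap a j) 0 = a.getD j 0 ∧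
        j ≤ (compF (Mset a) j).sup id ∧ Icc j ((compF (Mset a) j).sup id) ⊆ Mset a := by
    intro j hl he
    obtain ⟨hcomp, hjr, hr1, hIcc⟩ := compF_of_leftEnd hl
    set r := (compF (Mset a) j).sup id with hrdef
    have hfe : fmap a j = r + 1 := if_pos ⟨hl, he⟩
    have hrM : r ∈ Mset a := hIcc (mem_Icc.mpr ⟨hjr, le_refl r⟩)
    have hrc : r ∈ compF (Mset a) j := by rw [hcomp]; exact mem_Icc.mpr ⟨hjr, le_refl r⟩
    have hcompr : compF (Mset a) r = compF (Mset a) j := compF_eq_of_mem hrc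
    have hsurv : survRB a (r + 1) = true := by
      rw [survRB_iff]
      refine Or.inr ⟨by omega, ?_, ?_⟩
      · simp only [Nat.add_sub_cancel]
        rw [rightEnds, mem_filter]
        exact ⟨hrM, hr1⟩
      · simpa only [Nat.add_sub_cancel, hcompr] using he
    have hval : a.getD (r + 1) 0 = a.getD j 0 := by
      have hcard : (compF (Mset a) j).card = r + 1 - j := by
        rw [hcomp, Nat.card_Icc]
      rw [hcard] at he
      obtain ⟨d, hd⟩ := he
      have hrd : r + 1 = j + 2 * d := by omega
      have := alt_val a (sprL a) d j (fun i hi1 hi2 => by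
        have : i ∈ Mset a := hIcc (mem_Icc.mpr ⟨hi1, by omega⟩)
        exact (mem_Mset.mp this).2)
      rw [hrd]
      exact this
    rw [hfe]
    exact ⟨hsurv, rfl, by omega, hval, hjr, hIcc⟩
  have h1 : ∀ j, survivesB a j = true → survRB a (fmap a j) = true ∧ j ≤ fmap a j := by
    intro j hj
    rcases survivesB_iff.mp hj with h | ⟨hl, he⟩
    · rw [fmap_of_notAct h]
      exact ⟨survRB_iff.mpr (Or.inl h), le_refl j⟩
    · obtain ⟨hs, -, hle, -⟩ := key j hl he
      exact ⟨hs, hle⟩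
  have h4 : ∀ j, j < a.length → survivesB a j = true → fmap a j < a.length := by
    intro j hjL hj
    rcases survivesB_iff.mp hj with h | ⟨hl, he⟩
    · rwa [fmap_of_notAct h]
    · obtain ⟨-, hfe, -, -, hjr, hIcc⟩ := key j hl he
      have : (compF (Mset a) j).sup id ∈ Mset a :=
        hIcc (mem_Icc.mpr ⟨hjr, le_refl _⟩)
      have := mem_range.mp ((filter_subset _ _ : Mset a ⊆ range (a.length - 1)) this)
      omega
  have h3 : ∀ j j', survivesB a j = true → survivesB a j' = true → j < j' →
      fmap a j < fmap a j' := by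
    intro j j' hj hj' hlt
    rcases survivesB_iff.mp hj with h | ⟨hl, he⟩
    · rw [fmap_of_notAct h]
      exact lt_of_lt_of_le hlt (h1 j' hj').2
    · obtain ⟨-, hfe, -, -, hjr, hIcc⟩ := key j hl he
      set r := (compF (Mset a) j).sup id with hrdef
      have hAct : ∀ t, j ≤ t → t ≤ r + 1 → t ∈ ActF a := by
        intro t ht1 ht2
        rcases Nat.lt_or_ge t (r + 1) with h' | h'
        · exact Mset_subset_Act (hIcc (mem_Icc.mpr ⟨ht1, by omega⟩))
        · have : t = r + 1 := by omega
          rw [this]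
          exact mem_Act_iff.mpr (Or.inr ⟨by omega, by
            simpa using hIcc (mem_Icc.mpr ⟨hjr, le_refl r⟩)⟩)
      rcases survivesB_iff.mp hj' with h' | ⟨hl', he'⟩
      · rw [fmap_of_notAct h', hfe]
        by_contra hc
        push_neg at hc
        exact h' (hAct j' (by omega) (by omega))
      · obtain ⟨-, hfe', -, -, hjr', -⟩ := key j' hl' he'
        rw [hfe, hfe']
        have : r + 1 ≤ j' := by
          by_contra hc
          push_neg at hc
          have hj'M : j' - 1 ∈ Mset a := hIcc (mem_Icc.mpr ⟨by omega, by omega⟩)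
          rcases (mem_filter.mp hl').2 with h0 | h0
          · omega
          · exact h0 hj'M
        omega
  have h2 : ∀ k, survRB a k = true → ∃ j', survivesB a j' = true ∧ fmap a j' = k := by
    intro k hk
    rcases survRB_iff.mp hk with h | ⟨hk1, hre, hev⟩
    · exact ⟨k, survivesB_iff.mpr (Or.inl h), fmap_of_notAct h⟩
    · obtain ⟨hcl, hceq, hsup⟩ := compF_of_rightEnd hre
      set c := (compF (Mset a) (k - 1)).min'
        ⟨k - 1, self_mem_compF (mem_filter.mp hre).1⟩ with hcdef
      have hevc : Even (compF (Mset a) c).card := by rwa [hceq]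
      refine ⟨c, survivesB_iff.mpr (Or.inr ⟨hcl, hevc⟩), ?_⟩
      rw [fmap, if_pos ⟨hcl, hevc⟩, hceq, hsup]
      omega
  rw [omegaL, filter_eq_map_filter a.length (survivesB a) (survRB a) (fmap a) h1 h4 h3 h2,
    List.map_map]
  apply List.map_congr_left
  intro j hj
  have hpj := (List.mem_filter.mp hj).2
  simp only [Function.comp]
  rcases survivesB_iff.mp hpj with h | ⟨hl, he⟩
  · rw [fmap_of_notAct h]
  · exact ((key j hl he).2.2.2.1).symm

end OHara
namespace OHara
open Finset

/-- Reflection of a finset of indices `< n`. -/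
def reflS (n : ℕ) (S : Finset ℕ) : Finset ℕ := (range n).filter (fun i => n - 1 - i ∈ S)

theorem mem_reflS {n : ℕ} {S : Finset ℕ} {i : ℕ} :
    i ∈ reflS n S ↔ i < n ∧ n - 1 - i ∈ S := by simp [reflS]

theorem reflS_subset {n : ℕ} {S : Finset ℕ} : reflS n S ⊆ range n := filter_subset _ _

theorem reflS_reflS {n : ℕ} {S : Finset ℕ} (hS : S ⊆ range n) : reflS n (reflS n S) = S := by
  ext i
  simp only [mem_reflS]
  constructor
  · rintro ⟨h1, h2, h3⟩
    have e : n - 1 - (n - 1 - i) = i := by omega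
    rwa [e] at h3
  · intro hi
    have h1 := mem_range.mp (hS hi)
    have e : n - 1 - (n - 1 - i) = i := by omega
    exact ⟨h1, by omega, by rwa [e]⟩

theorem comp_reflect_mp {n : ℕ} {S : Finset ℕ} (hS : S ⊆ range n) {j k : ℕ} (hj : j < n)
    (hk : k ∈ compF (reflS n S) j) : k < n ∧ n - 1 - k ∈ compF S (n - 1 - j) := by
  rw [mem_compF] at hk
  obtain ⟨hkS', hsub⟩ := hk
  rw [mem_reflS] at hkS'
  refine ⟨hkS'.1, mem_compF.mpr ⟨hkS'.2, ?_⟩⟩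
  intro t ht
  rw [mem_Icc] at ht
  have hkn := hkS'.1
  have ht' : n - 1 - t ∈ Icc (min j k) (max j k) := by rw [mem_Icc]; omega
  have hm := hsub ht'
  rw [mem_reflS] at hm
  have e : n - 1 - (n - 1 - t) = t := by omega
  rw [e] at hm
  exact hm.2

theorem comp_reflect_iff {n : ℕ} {S : Finset ℕ} (hS : S ⊆ range n) {j k : ℕ} (hj : j < n) :
    k ∈ compF (reflS n S) j ↔ k < n ∧ n - 1 - k ∈ compF S (n - 1 - j) := by
  constructor
  · exact comp_reflect_mp hS hj
  · rintro ⟨hk, hmem⟩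
    have hj' : n - 1 - j < n := by omega
    have hmem' : n - 1 - k ∈ compF (reflS n (reflS n S)) (n - 1 - j) := by
      rwa [reflS_reflS hS]
    have := comp_reflect_mp (S := reflS n S) reflS_subset hj' hmem'
    have e1 : n - 1 - (n - 1 - k) = k := by omega
    have e2 : n - 1 - (n - 1 - j) = j := by omega
    rw [e1, e2] at this
    exact this.2

theorem card_comp_reflect {n : ℕ} {S : Finset ℕ} (hS : S ⊆ range n) {j : ℕ} (hj : j < n) :
    (compF (reflS n S) j).card = (compF S (n - 1 - j)).card := by
  apply Finset.card_bij (fun k _ => n - 1 - k)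
  · intro k hk
    exact ((comp_reflect_iff hS hj).mp hk).2
  · intro k1 hk1 k2 hk2 h
    have h1 := ((comp_reflect_iff hS hj).mp hk1).1
    have h2 := ((comp_reflect_iff hS hj).mp hk2).1
    omega
  · intro x hx
    have hxn : x < n := mem_range.mp (hS (compF_subset hx))
    refine ⟨n - 1 - x, (comp_reflect_iff hS hj).mpr ⟨by omega, ?_⟩, by omega⟩
    have e : n - 1 - (n - 1 - x) = x := by omega
    rwa [e]

theorem leftEnds_reflect {n : ℕ} {S : Finset ℕ} (hS : S ⊆ range n) {j : ℕ} :
    j ∈ leftEnds (reflS n S) ↔ j < n ∧ n - 1 - j ∈ rightEnds S := by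
  simp only [leftEnds, rightEnds, mem_filter, mem_reflS]
  constructor
  · rintro ⟨⟨hjn, hJS⟩, hcond⟩
    refine ⟨hjn, hJS, fun hmem => ?_⟩
    have hlt := mem_range.mp (hS hmem)
    rcases hcond with h0 | h0
    · omega
    · have e : n - 1 - (j - 1) = n - 1 - j + 1 := by omega
      exact h0 ⟨by omega, by rwa [e]⟩
  · rintro ⟨hjn, hJS, hJ1⟩
    refine ⟨⟨hjn, hJS⟩, ?_⟩
    rcases Nat.eq_zero_or_pos j with h0 | h0
    · exact Or.inl h0
    · refine Or.inr fun hmem => ?_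
      have e : n - 1 - (j - 1) = n - 1 - j + 1 := by omega
      rw [e] at hmem
      exact hJ1 hmem.2

theorem getD_reverse {a : List ℕ} {j : ℕ} (h : j < a.length) :
    a.reverse.getD j 0 = a.getD (a.length - 1 - j) 0 := by
  rw [List.getD_eq_getElem?_getD, List.getD_eq_getElem?_getD,
    List.getElem?_reverse (by simpa using h)]

end OHara
namespace OHara
open Finset

theorem pair_reverse {a : List ℕ} {n i : ℕ} (hlen : a.length = n + 1) (hi : i < n) :
    a.reverse.getD i 0 + a.reverse.getD (i + 1) 0 =
      a.getD (n - 1 - i) 0 + a.getD (n - 1 - i + 1) 0 := by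
  have h1 : a.reverse.getD i 0 = a.getD (n - i) 0 := by
    rw [getD_reverse (by omega)]
    congr 1
    omega
  have h2 : a.reverse.getD (i + 1) 0 = a.getD (n - 1 - i) 0 := by
    rw [getD_reverse (by omega)]
    congr 1
    omega
  have e : n - 1 - i + 1 = n - i := by omega
  rw [h1, h2, e]
  ring

theorem sprL_reverse {a : List ℕ} {n : ℕ} (hn : 1 ≤ n) (hlen : a.length = n + 1) :
    sprL a.reverse = sprL a := by
  have hrl : a.reverse.length = n + 1 := by simp [hlen]
  rw [sprL, sprL, hrl, hlen]
  simp only [Nat.add_sub_cancel]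
  apply le_antisymm
  · apply Finset.sup_le
    intro i hi
    have hi' := mem_range.mp hi
    rw [pair_reverse hlen hi']
    have e : n - 1 - i + 1 = (n - 1 - i) + 1 := rfl
    exact Finset.le_sup (f := fun i => a.getD i 0 + a.getD (i + 1) 0)
      (mem_range.mpr (by omega : n - 1 - i < n))
  · apply Finset.sup_le
    intro i hi
    have hi' := mem_range.mp hi
    have h := pair_reverse hlen (show n - 1 - i < n by omega)
    have e : n - 1 - (n - 1 - i) = i := by omega
    rw [e] at h
    rw [← h]
    exact Finset.le_sup (f := fun i => a.reverse.getD i 0 + a.reverse.getD (i + 1) 0)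
      (mem_range.mpr (by omega : n - 1 - i < n))

theorem Mset_reverse {a : List ℕ} {n : ℕ} (hn : 1 ≤ n) (hlen : a.length = n + 1) :
    Mset a.reverse = reflS n (Mset a) := by
  have hrl : a.reverse.length = n + 1 := by simp [hlen]
  ext i
  rw [mem_Mset, mem_reflS, mem_Mset, hrl, hlen, sprL_reverse hn hlen]
  simp only [Nat.add_sub_cancel]
  constructor
  · rintro ⟨hi, hp⟩
    rw [pair_reverse hlen hi] at hp
    exact ⟨hi, by omega, hp⟩
  · rintro ⟨hi, -, hp⟩
    rw [pair_reverse hlen hi]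
    exact ⟨hi, hp⟩

theorem Mset_subset_range {a : List ℕ} {n : ℕ} (hlen : a.length = n + 1) :
    Mset a ⊆ range n := by
  have : Mset a ⊆ range (a.length - 1) := filter_subset _ _
  rwa [hlen, Nat.add_sub_cancel] at this

theorem Act_reverse {a : List ℕ} {n j : ℕ} (hn : 1 ≤ n) (hlen : a.length = n + 1)
    (hj : j ≤ n) : (j ∈ ActF a.reverse ↔ n - j ∈ ActF a) := by
  have hM := Mset_subset_range hlen
  rw [mem_Act_iff, mem_Act_iff, Mset_reverse hn hlen, mem_reflS, mem_reflS]
  constructor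
  · rintro (⟨hjn, hmem⟩ | ⟨hj1, hj2, hmem⟩)
    · refine Or.inr ⟨by omega, ?_⟩
      have e : n - j - 1 = n - 1 - j := by omega
      rwa [e]
    · refine Or.inl ?_
      have e : n - 1 - (j - 1) = n - j := by omega
      rwa [e] at hmem
  · rintro (hmem | ⟨h1, hmem⟩)
    · have := mem_range.mp (hM hmem)
      refine Or.inr ⟨by omega, by omega, ?_⟩
      have e : n - 1 - (j - 1) = n - j := by omega
      rwa [e]
    · have := mem_range.mp (hM hmem)
      refine Or.inl ⟨by omega, ?_⟩
      have e : n - 1 - j = n - j - 1 := by omega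
      rwa [e]

theorem surv_reverse {a : List ℕ} {n j : ℕ} (hn : 1 ≤ n) (hlen : a.length = n + 1)
    (hj : j ≤ n) : survivesB a.reverse j = survRB a (n - j) := by
  have hM := Mset_subset_range hlen
  rw [survivesB, survRB, decide_eq_decide]
  rw [Mset_reverse hn hlen]
  constructor
  · rintro (h | ⟨hl, he⟩)
    · exact Or.inl fun hc => h ((Act_reverse hn hlen hj).mpr hc)
    · obtain ⟨hjn, hre⟩ := (leftEnds_reflect hM).mp hl
      refine Or.inr ⟨by omega, ?_, ?_⟩
      · have e : n - j - 1 = n - 1 - j := by omega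
        rwa [e]
      · have e : n - j - 1 = n - 1 - j := by omega
        rw [e, ← card_comp_reflect hM hjn]
        exact he
  · rintro (h | ⟨h1, hre, he⟩)
    · exact Or.inl fun hc => h ((Act_reverse hn hlen hj).mp hc)
    · have hjn : j < n := by omega
      have e : n - j - 1 = n - 1 - j := by omega
      rw [e] at hre he
      refine Or.inr ⟨(leftEnds_reflect hM).mpr ⟨hjn, hre⟩, ?_⟩
      rw [card_comp_reflect hM hjn]
      exact he

theorem range_reverse_eq (n : ℕ) :
    (List.range (n + 1)).reverse = (List.range (n + 1)).map (fun j => n - j) := by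
  apply List.ext_getElem
  · simp
  · intro i h1 h2
    simp only [List.getElem_reverse, List.getElem_map, List.getElem_range, List.length_range]
    simp only [List.length_reverse, List.length_range] at h1
    omega

end OHara
open OHara in
/-- `ω` commutes with the reversal involution `τ`: `ω(τ𝔞) = τ(ω(𝔞))`. -/
theorem omega_comm_tau (n m : ℕ) (hn : 1 ≤ n)
    (a : List ℕ) (hlen : a.length = n + 1) (hsum : a.sum = m) :
    omegaL a.reverse = (omegaL a).reverse := by
  have hrevlen : a.reverse.length = n + 1 := by simp [hlen]
  have hL : omegaL a.reverse =
      ((List.range (n + 1)).filter (fun j => survRB a (n - j))).map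
        (fun j => a.getD (n - j) 0) := by
    rw [omegaL, hrevlen]
    rw [List.filter_congr (fun x hx => surv_reverse hn hlen
      (by have := List.mem_range.mp hx; omega))]
    apply List.map_congr_left
    intro j hj
    have hjr : j < n + 1 := List.mem_range.mp (List.mem_filter.mp hj).1
    rw [getD_reverse (by omega)]
    congr 1
    omega
  have hR : (omegaL a).reverse =
      ((List.range (n + 1)).filter (fun j => survRB a (n - j))).map
        (fun j => a.getD (n - j) 0) := by
    rw [omega_eq_right a, hlen, ← List.map_reverse, ← List.filter_reverse, range_reverse_eq,
      List.filter_map, List.map_map]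
    rfl
  rw [hL, hR]
end

section
/- Let n ≥ 0, m ≥ 0 and 𝔞 ∈ A_n(m). Then σ(τ𝔞) = σ(𝔞). Consequently, for every k = ⌊n/2⌋ and nonnegative integers d_0,…,d_k, the set Q_n(d_0,…,d_k) is stable under the involution τ. -/
namespace OHaraAux
open Finset OHara

/-! ### compF basics -/

lemma mem_compF {S : Finset ℕ} {i j : ℕ} :
    j ∈ compF S i ↔ j ∈ S ∧ Finset.Icc (min i j) (max i j) ⊆ S := by
  simp [compF]

lemma mem_compF_self {S : Finset ℕ} {i : ℕ} (h : i ∈ S) : i ∈ compF S i := by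
  refine mem_compF.2 ⟨h, ?_⟩
  intro x hx
  simp only [Finset.mem_Icc] at hx
  have : x = i := by omega
  simpa [this]

lemma compF_subset (S : Finset ℕ) (i : ℕ) : compF S i ⊆ S := filter_subset _ _

lemma compF_nonempty {S : Finset ℕ} {i : ℕ} (h : i ∈ S) : (compF S i).Nonempty :=
  ⟨i, mem_compF_self h⟩

lemma mem_of_mem_compF {S : Finset ℕ} {i j : ℕ} (h : j ∈ compF S i) : i ∈ S := by
  refine (mem_compF.1 h).2 ?_
  simp only [Finset.mem_Icc]; omega

lemma compF_symm {S : Finset ℕ} {i j : ℕ} (h : j ∈ compF S i) : i ∈ compF S j := by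
  obtain ⟨h1, h2⟩ := mem_compF.1 h
  refine mem_compF.2 ⟨mem_of_mem_compF h, ?_⟩
  intro x hx
  apply h2
  simp only [Finset.mem_Icc] at hx ⊢
  omega

lemma compF_trans {S : Finset ℕ} {i j k : ℕ} (h1 : j ∈ compF S i) (h2 : k ∈ compF S j) :
    k ∈ compF S i := by
  obtain ⟨hj, hij⟩ := mem_compF.1 h1
  obtain ⟨hk, hjk⟩ := mem_compF.1 h2
  refine mem_compF.2 ⟨hk, ?_⟩
  intro x hx
  simp only [Finset.mem_Icc] at hx
  rcases le_or_gt x j with hc | hc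
  · rcases le_or_gt i x with hc2 | hc2
    · exact hij (by simp only [Finset.mem_Icc]; omega)
    · exact hjk (by simp only [Finset.mem_Icc]; omega)
  · rcases le_or_gt x i with hc2 | hc2
    · exact hij (by simp only [Finset.mem_Icc]; omega)
    · exact hjk (by simp only [Finset.mem_Icc]; omega)

lemma compF_eq_of_mem {S : Finset ℕ} {i j : ℕ} (h : j ∈ compF S i) :
    compF S j = compF S i := by
  ext k
  constructor
  · exact fun hk => compF_trans h hk
  · exact fun hk => compF_trans (compF_symm h) hk

lemma compF_eq_Icc {S : Finset ℕ} {i : ℕ} (h : i ∈ S) :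
    compF S i = Finset.Icc ((compF S i).min' (compF_nonempty h))
      ((compF S i).max' (compF_nonempty h)) := by
  set m := (compF S i).min' (compF_nonempty h) with hm
  set x := (compF S i).max' (compF_nonempty h) with hx
  have hmmem : m ∈ compF S i := Finset.min'_mem _ _
  have hxmem : x ∈ compF S i := Finset.max'_mem _ _
  have hmi : m ≤ i := Finset.min'_le _ _ (mem_compF_self h)
  have hix : i ≤ x := Finset.le_max' _ _ (mem_compF_self h)
  have hIml : Finset.Icc m i ⊆ S := by
    have := (mem_compF.1 hmmem).2
    intro y hy; apply this
    simp only [Finset.mem_Icc] at hy ⊢; omega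
  have hIxr : Finset.Icc i x ⊆ S := by
    have := (mem_compF.1 hxmem).2
    intro y hy; apply this
    simp only [Finset.mem_Icc] at hy ⊢; omega
  apply Finset.Subset.antisymm
  · intro j hj
    simp only [Finset.mem_Icc]
    exact ⟨Finset.min'_le _ _ hj, Finset.le_max' _ _ hj⟩
  · intro j hj
    simp only [Finset.mem_Icc] at hj
    rcases le_or_gt j i with hc | hc
    · refine mem_compF.2 ⟨hIml (by simp only [Finset.mem_Icc]; omega), ?_⟩
      intro y hy
      apply hIml
      simp only [Finset.mem_Icc] at hy ⊢; omega
    · refine mem_compF.2 ⟨hIxr (by simp only [Finset.mem_Icc]; omega), ?_⟩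
      intro y hy
      apply hIxr
      simp only [Finset.mem_Icc] at hy ⊢; omega

lemma max'_succ_not_mem {S : Finset ℕ} {i : ℕ} (h : i ∈ S) :
    (compF S i).max' (compF_nonempty h) + 1 ∉ S := by
  intro hmem
  set x := (compF S i).max' (compF_nonempty h) with hx
  have hxmem : x ∈ compF S i := Finset.max'_mem _ _
  have hix : i ≤ x := Finset.le_max' _ _ (mem_compF_self h)
  have hIxr : Finset.Icc i x ⊆ S := by
    have := (mem_compF.1 hxmem).2
    intro y hy; apply this
    simp only [Finset.mem_Icc] at hy ⊢; omega
  have : x + 1 ∈ compF S i := by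
    refine mem_compF.2 ⟨hmem, ?_⟩
    intro y hy
    simp only [Finset.mem_Icc] at hy
    rcases eq_or_lt_of_le hy.2 with hc | hc
    · rcases max_choice i (x+1) with h' | h' <;> rw [h'] at hc
      · omega
      · subst hc; exact hmem
    · apply hIxr
      simp only [Finset.mem_Icc]
      omega
  have := Finset.le_max' _ _ this
  omega

lemma min'_pred_not_mem {S : Finset ℕ} {i : ℕ} (h : i ∈ S)
    (h1 : 1 ≤ (compF S i).min' (compF_nonempty h)) :
    (compF S i).min' (compF_nonempty h) - 1 ∉ S := by
  intro hmem
  set m := (compF S i).min' (compF_nonempty h) with hm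
  have hmmem : m ∈ compF S i := Finset.min'_mem _ _
  have hmi : m ≤ i := Finset.min'_le _ _ (mem_compF_self h)
  have hIml : Finset.Icc m i ⊆ S := by
    have := (mem_compF.1 hmmem).2
    intro y hy; apply this
    simp only [Finset.mem_Icc] at hy ⊢; omega
  have : m - 1 ∈ compF S i := by
    refine mem_compF.2 ⟨hmem, ?_⟩
    intro y hy
    simp only [Finset.mem_Icc] at hy
    rcases eq_or_lt_of_le hy.1 with hc | hc
    · rcases min_choice i (m-1) with h' | h' <;> rw [h'] at hc
      · omega
      · exact hc ▸ hmem
    · apply hIml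
      simp only [Finset.mem_Icc]
      omega
  have := Finset.min'_le _ _ this
  omega

/-- Characterization of a component as an interval. -/
lemma compF_eq_Icc_of {T : Finset ℕ} {i p q : ℕ} (hT : i ∈ T) (hpq : Finset.Icc p q ⊆ T)
    (hpi : p ≤ i) (hiq : i ≤ q) (hp : p = 0 ∨ p - 1 ∉ T) (hq : q + 1 ∉ T) :
    compF T i = Finset.Icc p q := by
  have hsub : Finset.Icc p q ⊆ compF T i := by
    intro j hj
    simp only [Finset.mem_Icc] at hj
    refine mem_compF.2 ⟨hpq (by simp only [Finset.mem_Icc]; omega), ?_⟩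
    intro y hy
    apply hpq
    simp only [Finset.mem_Icc] at hy ⊢
    omega
  apply Finset.Subset.antisymm _ hsub
  intro j hj
  obtain ⟨hjT, hIcc⟩ := mem_compF.1 hj
  simp only [Finset.mem_Icc]
  by_contra hcon
  push_neg at hcon
  rcases lt_or_ge j p with hc | hc
  · have hp1 : p - 1 ∈ T := by
      apply hIcc
      simp only [Finset.mem_Icc]
      omega
    rcases hp with h' | h'
    · omega
    · exact h' hp1
  · have : q + 1 ∈ T := by
      apply hIcc
      simp only [Finset.mem_Icc]
      omega
    exact hq this

end OHaraAux

namespace OHaraAux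
open Finset OHara

/-- Right endpoints of maximal intervals. -/
def rEnds (S : Finset ℕ) : Finset ℕ := S.filter (fun i => i + 1 ∉ S)

lemma mem_leftEnds {S : Finset ℕ} {i : ℕ} :
    i ∈ leftEnds S ↔ i ∈ S ∧ (i = 0 ∨ i - 1 ∉ S) := by
  simp [leftEnds]

lemma mem_rEnds {S : Finset ℕ} {i : ℕ} :
    i ∈ rEnds S ↔ i ∈ S ∧ i + 1 ∉ S := by
  simp [rEnds]

lemma min'_mem_leftEnds {S : Finset ℕ} {i : ℕ} (h : i ∈ S) :
    (compF S i).min' (compF_nonempty h) ∈ leftEnds S := by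
  set m := (compF S i).min' (compF_nonempty h) with hm
  refine mem_leftEnds.2 ⟨compF_subset S i (Finset.min'_mem _ _), ?_⟩
  rcases Nat.eq_zero_or_pos m with h0 | h0
  · exact Or.inl h0
  · exact Or.inr (min'_pred_not_mem h h0)

lemma max'_mem_rEnds {S : Finset ℕ} {i : ℕ} (h : i ∈ S) :
    (compF S i).max' (compF_nonempty h) ∈ rEnds S :=
  mem_rEnds.2 ⟨compF_subset S i (Finset.max'_mem _ _), max'_succ_not_mem h⟩

lemma leftEnd_min' {S : Finset ℕ} {c : ℕ} (hc : c ∈ leftEnds S) :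
    (compF S c).min' (compF_nonempty (mem_leftEnds.1 hc).1) = c := by
  obtain ⟨hcS, hc0⟩ := mem_leftEnds.1 hc
  set m := (compF S c).min' (compF_nonempty hcS) with hm
  have hmc : m ≤ c := Finset.min'_le _ _ (mem_compF_self hcS)
  by_contra hne
  have hlt : m < c := lt_of_le_of_ne hmc hne
  have : c - 1 ∈ compF S c := by
    rw [compF_eq_Icc hcS]
    simp only [Finset.mem_Icc]
    refine ⟨by omega, ?_⟩
    have := Finset.le_max' _ c (mem_compF_self hcS)
    omega
  have : c - 1 ∈ S := compF_subset S c this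
  rcases hc0 with h0 | h0
  · omega
  · exact h0 this

lemma rEnd_max' {S : Finset ℕ} {r : ℕ} (hr : r ∈ rEnds S) :
    (compF S r).max' (compF_nonempty (mem_rEnds.1 hr).1) = r := by
  obtain ⟨hrS, hr1⟩ := mem_rEnds.1 hr
  set x := (compF S r).max' (compF_nonempty hrS) with hx
  have hrx : r ≤ x := Finset.le_max' _ _ (mem_compF_self hrS)
  by_contra hne
  have hlt : r < x := lt_of_le_of_ne hrx (fun h => hne h.symm)
  have : r + 1 ∈ compF S r := by
    rw [compF_eq_Icc hrS]
    simp only [Finset.mem_Icc]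
    have := Finset.min'_le _ r (mem_compF_self hrS)
    omega
  exact hr1 (compF_subset S r this)

/-- Facts about a left end: its component is `Icc c (c + card - 1)`,
and `c + card - 1` is a right end with the same component. -/
lemma leftEnd_facts {S : Finset ℕ} {c : ℕ} (hc : c ∈ leftEnds S) :
    compF S c = Finset.Icc c (c + (compF S c).card - 1) ∧
    1 ≤ (compF S c).card ∧
    (c + (compF S c).card - 1) ∈ rEnds S ∧
    compF S (c + (compF S c).card - 1) = compF S c := by
  have hcS : c ∈ S := (mem_leftEnds.1 hc).1
  have hmin : (compF S c).min' (compF_nonempty hcS) = c := leftEnd_min' hc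
  set x := (compF S c).max' (compF_nonempty hcS) with hx
  have hIcc : compF S c = Finset.Icc c x := by
    rw [compF_eq_Icc hcS, hmin]
  have hcx : c ≤ x := by
    have := Finset.min'_le _ x (Finset.max'_mem _ (compF_nonempty hcS))
    omega
  have hcard : (compF S c).card = x + 1 - c := by
    rw [hIcc, Nat.card_Icc]
  have hxeq : c + (compF S c).card - 1 = x := by omega
  have hxcomp : x ∈ compF S c := Finset.max'_mem _ _
  refine ⟨by rw [hxeq]; exact hIcc, by omega, ?_, ?_⟩
  · rw [hxeq]; exact max'_mem_rEnds hcS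
  · rw [hxeq]; exact compF_eq_of_mem hxcomp

/-- Facts about a right end: its component is `Icc (r + 1 - card) r`,
and `r + 1 - card` is a left end with the same component. -/
lemma rEnd_facts {S : Finset ℕ} {r : ℕ} (hr : r ∈ rEnds S) :
    compF S r = Finset.Icc (r + 1 - (compF S r).card) r ∧
    (compF S r).card ≤ r + 1 ∧
    (r + 1 - (compF S r).card) ∈ leftEnds S ∧
    compF S (r + 1 - (compF S r).card) = compF S r := by
  have hrS : r ∈ S := (mem_rEnds.1 hr).1
  have hmax : (compF S r).max' (compF_nonempty hrS) = r := rEnd_max' hr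
  set m := (compF S r).min' (compF_nonempty hrS) with hm
  have hIcc : compF S r = Finset.Icc m r := by
    rw [compF_eq_Icc hrS, hmax]
  have hmr : m ≤ r := Finset.min'_le _ _ (mem_compF_self hrS)
  have hcard : (compF S r).card = r + 1 - m := by
    rw [hIcc, Nat.card_Icc]
  have hmeq : r + 1 - (compF S r).card = m := by omega
  have hmcomp : m ∈ compF S r := Finset.min'_mem _ _
  refine ⟨by rw [hmeq]; exact hIcc, by omega, ?_, ?_⟩
  · rw [hmeq]; exact min'_mem_leftEnds hrS
  · rw [hmeq]; exact compF_eq_of_mem hmcomp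

/-- Sums of functions of component cardinalities over left vs right ends agree. -/
lemma sum_leftEnds_eq_rEnds (S : Finset ℕ) (g : ℕ → ℕ) :
    ∑ c ∈ leftEnds S, g (compF S c).card = ∑ r ∈ rEnds S, g (compF S r).card := by
  refine Finset.sum_nbij' (fun c => c + (compF S c).card - 1)
    (fun r => r + 1 - (compF S r).card) ?_ ?_ ?_ ?_ ?_
  · intro c hc; exact (leftEnd_facts hc).2.2.1
  · intro r hr; exact (rEnd_facts hr).2.2.1
  · intro c hc
    obtain ⟨hIcc, hcard1, hrmem, hcompeq⟩ := leftEnd_facts hc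
    rw [hcompeq]
    omega
  · intro r hr
    obtain ⟨hIcc, hcard1, hlmem, hcompeq⟩ := rEnd_facts hr
    rw [hcompeq]
    have hrS : r ∈ S := (mem_rEnds.1 hr).1
    have : r ∈ compF S r := mem_compF_self hrS
    rw [hIcc] at this
    simp only [Finset.mem_Icc] at this
    omega
  · intro c hc
    rw [(leftEnd_facts hc).2.2.2]

end OHaraAux

namespace OHaraAux
open Finset OHara

/-! ### Reflection `ρ i = N - 1 - i` on subsets of `range N` -/

lemma refl_mem {N : ℕ} {S : Finset ℕ} (hS : S ⊆ Finset.range N) {j : ℕ} :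
    j ∈ S.image (fun i => N - 1 - i) ↔ (j < N ∧ N - 1 - j ∈ S) := by
  simp only [Finset.mem_image]
  constructor
  · rintro ⟨y, hy, rfl⟩
    have := Finset.mem_range.1 (hS hy)
    constructor
    · omega
    · have : N - 1 - (N - 1 - y) = y := by omega
      rw [this]; exact hy
  · rintro ⟨hj, hmem⟩
    refine ⟨N - 1 - j, hmem, by omega⟩

lemma refl_card_compF {N : ℕ} {S : Finset ℕ} (hS : S ⊆ Finset.range N) {i : ℕ} (hi : i ∈ S) :
    (compF (S.image (fun k => N - 1 - k)) (N - 1 - i)).card = (compF S i).card := by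
  have hiN : i < N := Finset.mem_range.1 (hS hi)
  set m := (compF S i).min' (compF_nonempty hi) with hm
  set x := (compF S i).max' (compF_nonempty hi) with hx
  have hIcc : compF S i = Finset.Icc m x := compF_eq_Icc hi
  have hmi : m ≤ i := Finset.min'_le _ _ (mem_compF_self hi)
  have hix : i ≤ x := Finset.le_max' _ _ (mem_compF_self hi)
  have hxN : x < N := Finset.mem_range.1 (hS (compF_subset S i (Finset.max'_mem _ _)))
  have hIccS : Finset.Icc m x ⊆ S := hIcc ▸ compF_subset S i
  have hxnot : x + 1 ∉ S := max'_succ_not_mem hi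
  have hmnot : m = 0 ∨ m - 1 ∉ S := by
    rcases Nat.eq_zero_or_pos m with h0 | h0
    · exact Or.inl h0
    · exact Or.inr (min'_pred_not_mem hi h0)
  have hchar : compF (S.image (fun k => N - 1 - k)) (N - 1 - i)
      = Finset.Icc (N - 1 - x) (N - 1 - m) := by
    apply compF_eq_Icc_of
    · exact (refl_mem hS).2 ⟨by omega, by rw [show N - 1 - (N - 1 - i) = i by omega]; exact hi⟩
    · intro z hz
      simp only [Finset.mem_Icc] at hz
      refine (refl_mem hS).2 ⟨by omega, ?_⟩
      apply hIccS
      simp only [Finset.mem_Icc]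
      omega
    · omega
    · omega
    · rcases Nat.lt_or_ge x (N - 1) with hc | hc
      · right
        intro hmem
        rw [refl_mem hS] at hmem
        have : N - 1 - (N - 1 - x - 1) = x + 1 := by omega
        rw [this] at hmem
        exact hxnot hmem.2
      · left; omega
    · intro hmem
      rw [refl_mem hS] at hmem
      obtain ⟨h1, h2⟩ := hmem
      have hm1 : 1 ≤ m := by omega
      have : N - 1 - (N - 1 - m + 1) = m - 1 := by omega
      rw [this] at h2
      rcases hmnot with h' | h'
      · omega
      · exact h' h2
  rw [hchar, hIcc, Nat.card_Icc, Nat.card_Icc]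
  omega

lemma refl_leftEnds {N : ℕ} {S : Finset ℕ} (hS : S ⊆ Finset.range N) :
    leftEnds (S.image (fun i => N - 1 - i)) = (rEnds S).image (fun i => N - 1 - i) := by
  have hrS : rEnds S ⊆ S := Finset.filter_subset _ _
  ext j
  rw [mem_leftEnds, refl_mem hS, refl_mem (hrS.trans hS), mem_rEnds]
  constructor
  · rintro ⟨⟨hj, hmem⟩, hor⟩
    refine ⟨hj, hmem, ?_⟩
    intro hsucc
    have hsN : N - 1 - j + 1 < N := Finset.mem_range.1 (hS hsucc)
    have hj1 : 1 ≤ j := by omega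
    rcases hor with h0 | h0
    · omega
    · apply h0
      rw [refl_mem hS]
      refine ⟨by omega, ?_⟩
      rw [show N - 1 - (j - 1) = N - 1 - j + 1 by omega]
      exact hsucc
  · rintro ⟨hj, hmem, hsucc⟩
    refine ⟨⟨hj, hmem⟩, ?_⟩
    rcases Nat.eq_zero_or_pos j with h0 | h0
    · exact Or.inl h0
    · right
      intro hcon
      rw [refl_mem hS] at hcon
      apply hsucc
      rw [show N - 1 - (j - 1) = N - 1 - j + 1 by omega] at hcon
      exact hcon.2

end OHaraAux

namespace OHaraAux
open Finset OHara

/-! ### Sorting helpers -/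

lemma sort_eq_of {s : Finset ℕ} {l : List ℕ} (hl : l.Pairwise (· < ·))
    (h : ∀ x, x ∈ l ↔ x ∈ s) : s.sort (· ≤ ·) = l := by
  apply List.Perm.eq_of_pairwise' (Finset.pairwise_sort _ _) (hl.imp le_of_lt)
  refine (List.perm_ext_iff_of_nodup (Finset.sort_nodup _ _) hl.nodup).2 ?_
  intro x
  rw [Finset.mem_sort]
  exact (h x).symm

lemma sort_filter_range (L : ℕ) (p : ℕ → Bool) :
    ((Finset.range L).filter (fun j => p j = true)).sort (· ≤ ·)
      = (List.range L).filter p := by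
  apply sort_eq_of
  · exact (List.sortedLT_range L).pairwise.filter p
  · intro x
    rw [List.mem_filter, Finset.mem_filter, List.mem_range, Finset.mem_range]

lemma sort_image_mono {s : Finset ℕ} {φ : ℕ → ℕ}
    (h : ∀ x ∈ s, ∀ y ∈ s, x < y → φ x < φ y) :
    (s.image φ).sort (· ≤ ·) = (s.sort (· ≤ ·)).map φ := by
  apply sort_eq_of
  · rw [List.pairwise_map]
    refine (Finset.sortedLT_sort s).pairwise.imp_of_mem ?_
    intro x y hx hy hxy
    exact h x ((Finset.mem_sort _).1 hx) y ((Finset.mem_sort _).1 hy) hxy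
  · intro x
    simp only [List.mem_map, Finset.mem_image, Finset.mem_sort]

lemma sort_image_anti {s : Finset ℕ} {ρ : ℕ → ℕ}
    (h : ∀ x ∈ s, ∀ y ∈ s, x < y → ρ y < ρ x) :
    (s.image ρ).sort (· ≤ ·) = ((s.sort (· ≤ ·)).map ρ).reverse := by
  apply sort_eq_of
  · rw [List.pairwise_reverse, List.pairwise_map]
    refine (Finset.sortedLT_sort s).pairwise.imp_of_mem ?_
    intro x y hx hy hxy
    exact h x ((Finset.mem_sort _).1 hx) y ((Finset.mem_sort _).1 hy) hxy
  · intro x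
    simp only [List.mem_reverse, List.mem_map, Finset.mem_image, Finset.mem_sort]

/-! ### getD and reverse -/

lemma getD_reverse {a : List ℕ} {j : ℕ} (hj : j < a.length) :
    a.reverse.getD j 0 = a.getD (a.length - 1 - j) 0 := by
  have h1 : j < a.reverse.length := by simpa using hj
  rw [List.getD_eq_getElem _ _ h1, List.getD_eq_getElem _ _ (by omega),
    List.getElem_reverse]

end OHaraAux

namespace OHaraAux
open Finset OHara

lemma Mset_subset_range (a : List ℕ) : Mset a ⊆ Finset.range (a.length - 1) :=
  Finset.filter_subset _ _

lemma mem_Mset {a : List ℕ} {i : ℕ} :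
    i ∈ Mset a ↔ i < a.length - 1 ∧ a.getD i 0 + a.getD (i + 1) 0 = sprL a := by
  simp [Mset]

lemma pair_reverse {a : List ℕ} {i : ℕ} (hi : i < a.length - 1) :
    a.reverse.getD i 0 + a.reverse.getD (i + 1) 0
      = a.getD ((a.length - 1) - 1 - i) 0 + a.getD ((a.length - 1) - 1 - i + 1) 0 := by
  rw [getD_reverse (by omega), getD_reverse (by omega)]
  rw [show a.length - 1 - i = (a.length - 1) - 1 - i + 1 by omega,
    show a.length - 1 - (i + 1) = (a.length - 1) - 1 - i by omega]
  exact Nat.add_comm _ _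

lemma sprL_reverse (a : List ℕ) : sprL a.reverse = sprL a := by
  unfold sprL
  rw [List.length_reverse]
  set N := a.length - 1 with hN
  have h1 : ∀ i ∈ Finset.range N,
      a.reverse.getD i 0 + a.reverse.getD (i + 1) 0
        = a.getD (N - 1 - i) 0 + a.getD (N - 1 - i + 1) 0 := by
    intro i hi
    exact pair_reverse (Finset.mem_range.1 hi)
  rw [Finset.sup_congr rfl h1]
  have himg : (Finset.range N).image (fun i => N - 1 - i) = Finset.range N := by
    ext j
    simp only [Finset.mem_image, Finset.mem_range]
    constructor
    · rintro ⟨y, hy, rfl⟩; omega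
    · intro hj; exact ⟨N - 1 - j, by omega, by omega⟩
  conv_rhs => rw [← himg, Finset.sup_image]
  rfl

lemma Mset_reverse (a : List ℕ) :
    Mset a.reverse = (Mset a).image (fun i => (a.length - 1) - 1 - i) := by
  set N := a.length - 1 with hN
  ext j
  rw [refl_mem (Mset_subset_range a), mem_Mset, mem_Mset, List.length_reverse,
    sprL_reverse]
  constructor
  · rintro ⟨hj, hpair⟩
    rw [pair_reverse hj] at hpair
    exact ⟨hj, by omega, hpair⟩
  · rintro ⟨hj, _, hpair⟩
    refine ⟨hj, ?_⟩
    rw [pair_reverse hj]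
    exact hpair

lemma ecdL_reverse (a : List ℕ) : ecdL a.reverse = ecdL a := by
  unfold ecdL
  set N := a.length - 1 with hN
  set S := Mset a with hS
  have hSr : S ⊆ Finset.range N := Mset_subset_range a
  have hrS : rEnds S ⊆ S := Finset.filter_subset _ _
  rw [Mset_reverse, refl_leftEnds hSr]
  rw [Finset.sum_image (by
    intro x hx y hy hxy
    have hx' := Finset.mem_range.1 (hSr (hrS hx))
    have hy' := Finset.mem_range.1 (hSr (hrS hy))
    simp only at hxy
    omega)]
  rw [Finset.sum_congr rfl (fun r hr => by
    rw [refl_card_compF hSr (hrS hr)])]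
  exact (sum_leftEnds_eq_rEnds S (fun t => (t + 1) / 2)).symm

end OHaraAux

namespace OHaraAux
open Finset OHara

/-! ### Survivor sets -/

def SLs (a : List ℕ) : Finset ℕ :=
  (Finset.range a.length).filter (fun j => survivesB a j = true)

def survRB (a : List ℕ) (j : ℕ) : Bool :=
  decide (j ∉ ActF a ∨ (1 ≤ j ∧ (j - 1) ∈ rEnds (Mset a) ∧ Even (compF (Mset a) (j - 1)).card))

def SRs (a : List ℕ) : Finset ℕ :=
  (Finset.range a.length).filter (fun j => survRB a j = true)

lemma mem_SLs {a : List ℕ} {j : ℕ} :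
    j ∈ SLs a ↔ j < a.length ∧ (j ∉ ActF a ∨
      (j ∈ leftEnds (Mset a) ∧ Even (compF (Mset a) j).card)) := by
  simp [SLs, survivesB]

lemma mem_SRs {a : List ℕ} {j : ℕ} :
    j ∈ SRs a ↔ j < a.length ∧ (j ∉ ActF a ∨
      (1 ≤ j ∧ (j - 1) ∈ rEnds (Mset a) ∧ Even (compF (Mset a) (j - 1)).card)) := by
  simp [SRs, survRB]

lemma mem_ActF {a : List ℕ} {j : ℕ} :
    j ∈ ActF a ↔ j ∈ Mset a ∨ (1 ≤ j ∧ j - 1 ∈ Mset a) := by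
  simp only [ActF, Finset.mem_union, Finset.mem_image]
  constructor
  · rintro (h | ⟨y, hy, rfl⟩)
    · exact Or.inl h
    · exact Or.inr ⟨by omega, by simpa using hy⟩
  · rintro (h | ⟨h1, h2⟩)
    · exact Or.inl h
    · exact Or.inr ⟨j - 1, h2, by omega⟩

lemma omegaL_eq_sort (a : List ℕ) :
    omegaL a = ((SLs a).sort (· ≤ ·)).map (fun j => a.getD j 0) := by
  rw [omegaL, ← sort_filter_range a.length (fun j => survivesB a j)]
  rfl

/-! ### The survivor set of the reverse -/

lemma survB_reverse {a : List ℕ} {j : ℕ} (hj : j < a.length) :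
    survivesB a.reverse j = survRB a (a.length - 1 - j) := by
  set L := a.length with hL
  set N := L - 1 with hN
  set S := Mset a with hS
  set k := L - 1 - j with hk
  have hSr : S ⊆ Finset.range N := Mset_subset_range a
  have hrS : rEnds S ⊆ S := Finset.filter_subset _ _
  have hL1 : 1 ≤ L := by omega
  -- membership correspondences
  have hMrev : ∀ i : ℕ, i < L → (i ∈ Mset a.reverse ↔ (1 ≤ L - 1 - i ∧ L - 1 - i - 1 ∈ S)) := by
    intro i hi
    rw [Mset_reverse, refl_mem hSr]
    constructor
    · rintro ⟨h1, h2⟩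
      refine ⟨by omega, ?_⟩
      rwa [show L - 1 - i - 1 = N - 1 - i by omega]
    · rintro ⟨h1, h2⟩
      have h2' : N - 1 - i ∈ S := by rwa [show N - 1 - i = L - 1 - i - 1 by omega]
      have := Finset.mem_range.1 (hSr h2')
      exact ⟨by omega, h2'⟩
  have hAct : (j ∈ ActF a.reverse ↔ k ∈ ActF a) := by
    rw [mem_ActF, mem_ActF]
    constructor
    · rintro (h | ⟨h1, h2⟩)
      · rw [hMrev j hj] at h
        exact Or.inr h
      · rw [hMrev (j - 1) (by omega)] at h2
        obtain ⟨h3, h4⟩ := h2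
        left
        rwa [show k = L - 1 - (j - 1) - 1 by omega]
    · rintro (h | ⟨h1, h2⟩)
      · right
        have hk2 := Finset.mem_range.1 (hSr h)
        refine ⟨by omega, ?_⟩
        rw [hMrev (j - 1) (by omega)]
        exact ⟨by omega, by rwa [show L - 1 - (j - 1) - 1 = k by omega]⟩
      · left
        rw [hMrev j hj]
        exact ⟨h1, h2⟩
  have hLE : (j ∈ leftEnds (Mset a.reverse) ↔ (1 ≤ k ∧ k - 1 ∈ rEnds S)) := by
    rw [Mset_reverse, refl_leftEnds hSr, refl_mem (hrS.trans hSr)]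
    constructor
    · rintro ⟨h1, h2⟩
      refine ⟨by omega, ?_⟩
      rwa [show k - 1 = N - 1 - j by omega]
    · rintro ⟨h1, h2⟩
      have h2' : N - 1 - j ∈ rEnds S := by rwa [show N - 1 - j = k - 1 by omega]
      have := Finset.mem_range.1 (hSr (hrS h2'))
      exact ⟨by omega, h2'⟩
  have hCard : (1 ≤ k ∧ k - 1 ∈ S) →
      (compF (Mset a.reverse) j).card = (compF S (k - 1)).card := by
    rintro ⟨h1, h2⟩
    rw [Mset_reverse]
    have := Finset.mem_range.1 (hSr h2)
    have hjeq : j = N - 1 - (k - 1) := by omega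
    rw [hjeq]
    exact refl_card_compF hSr h2
  simp only [survivesB, survRB]
  congr 1
  apply propext
  constructor
  · rintro (h | ⟨h1, h2⟩)
    · left; rwa [← hAct]
    · right
      rw [hLE] at h1
      refine ⟨h1.1, h1.2, ?_⟩
      rw [← hCard ⟨h1.1, hrS h1.2⟩]
      exact h2
  · rintro (h | ⟨h1, h2, h3⟩)
    · left; rwa [hAct]
    · right
      rw [hLE]
      refine ⟨⟨h1, h2⟩, ?_⟩
      rw [hCard ⟨h1, hrS h2⟩]
      exact h3

lemma SLs_reverse (a : List ℕ) :
    SLs a.reverse = (SRs a).image (fun j => a.length - 1 - j) := by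
  have hsub : SRs a ⊆ Finset.range a.length := Finset.filter_subset _ _
  ext j
  rw [refl_mem hsub, mem_SRs]
  simp only [SLs, Finset.mem_filter, Finset.mem_range, List.length_reverse]
  constructor
  · rintro ⟨hj, hsurv⟩
    rw [survB_reverse hj] at hsurv
    simp only [survRB, decide_eq_true_eq] at hsurv
    exact ⟨hj, by omega, hsurv⟩
  · rintro ⟨hj, _, hsurv⟩
    refine ⟨hj, ?_⟩
    rw [survB_reverse hj]
    simp only [survRB, decide_eq_true_eq]
    exact hsurv

end OHaraAux

namespace OHaraAux
open Finset OHara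

/-! ### The shift map on survivors -/

def phiF (a : List ℕ) (j : ℕ) : ℕ :=
  if j ∈ leftEnds (Mset a) ∧ Even (compF (Mset a) j).card
    then j + (compF (Mset a) j).card else j

lemma special_facts {a : List ℕ} {c : ℕ}
    (h : c ∈ leftEnds (Mset a) ∧ Even (compF (Mset a) c).card) :
    phiF a c = c + (compF (Mset a) c).card ∧
    compF (Mset a) c = Finset.Icc c (phiF a c - 1) ∧
    1 ≤ (compF (Mset a) c).card ∧
    (phiF a c - 1) ∈ rEnds (Mset a) ∧
    compF (Mset a) (phiF a c - 1) = compF (Mset a) c ∧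
    phiF a c < a.length := by
  have hphi : phiF a c = c + (compF (Mset a) c).card := if_pos h
  obtain ⟨hIcc, hcard, hrmem, hcomp⟩ := leftEnd_facts h.1
  have hr : c + (compF (Mset a) c).card - 1 = phiF a c - 1 := by omega
  have hlt : phiF a c < a.length := by
    have := Finset.mem_range.1 (Mset_subset_range a ((Finset.filter_subset _ _) hrmem))
    omega
  exact ⟨hphi, by rw [← hr]; exact hIcc, hcard, hr ▸ hrmem, hr ▸ hcomp, hlt⟩

lemma phiF_mono (a : List ℕ) :
    ∀ x ∈ SLs a, ∀ y ∈ SLs a, x < y → phiF a x < phiF a y := by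
  intro x hx y hy hxy
  obtain ⟨hxL, hxor⟩ := mem_SLs.1 hx
  obtain ⟨hyL, hyor⟩ := mem_SLs.1 hy
  by_cases hxs : x ∈ leftEnds (Mset a) ∧ Even (compF (Mset a) x).card
  · obtain ⟨hphix, hIccx, hcardx, hrx, hcompx, hltx⟩ := special_facts hxs
    -- x is special; key claim: y > phiF a x
    have hykey : phiF a x < y := by
      by_contra hcon
      push_neg at hcon
      by_cases hy' : y ≤ phiF a x - 1
      · -- y inside the component of x
        have hymem : y ∈ Mset a := by
          have : y ∈ compF (Mset a) x := by
            rw [hIccx]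
            simp only [Finset.mem_Icc]
            omega
          exact compF_subset _ _ this
        rcases hyor with hnot | hspec
        · exact hnot (mem_ActF.2 (Or.inl hymem))
        · -- y is a left end inside the interval, but y - 1 is also in Mset a
          have hy1 : y - 1 ∈ Mset a := by
            have : y - 1 ∈ compF (Mset a) x := by
              rw [hIccx]
              simp only [Finset.mem_Icc]
              omega
            exact compF_subset _ _ this
          rcases (mem_leftEnds.1 hspec.1).2 with h0 | h0
          · omega
          · exact h0 hy1
      · -- y = phiF a x : active via the right end
        have hyeq : y = phiF a x := by omega
        have hr : phiF a x - 1 ∈ Mset a := (Finset.filter_subset _ _) hrx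
        have hyAct : y ∈ ActF a := mem_ActF.2 (Or.inr ⟨by omega, by rw [hyeq]; exact hr⟩)
        rcases hyor with hnot | hspec
        · exact hnot hyAct
        · -- y a left end with y - 1 = phiF a x - 1 ∈ Mset a
          rcases (mem_leftEnds.1 hspec.1).2 with h0 | h0
          · omega
          · exact h0 (by rw [hyeq]; exact hr)
    by_cases hys : y ∈ leftEnds (Mset a) ∧ Even (compF (Mset a) y).card
    · have hphiy := (special_facts hys).1
      have hcy := (special_facts hys).2.2.1
      omega
    · rwa [show phiF a y = y from if_neg hys]
  · rw [show phiF a x = x from if_neg hxs]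
    by_cases hys : y ∈ leftEnds (Mset a) ∧ Even (compF (Mset a) y).card
    · have hphiy := (special_facts hys).1
      have hcy := (special_facts hys).2.2.1
      omega
    · rw [show phiF a y = y from if_neg hys]
      exact hxy

lemma phiF_image (a : List ℕ) : (SLs a).image (phiF a) = SRs a := by
  ext j
  constructor
  · rw [Finset.mem_image]
    rintro ⟨c, hc, rfl⟩
    obtain ⟨hcL, hcor⟩ := mem_SLs.1 hc
    by_cases hcs : c ∈ leftEnds (Mset a) ∧ Even (compF (Mset a) c).card
    · obtain ⟨hphi, hIcc, hcard, hrmem, hcomp, hlt⟩ := special_facts hcs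
      refine mem_SRs.2 ⟨hlt, Or.inr ⟨by omega, hrmem, ?_⟩⟩
      rw [hcomp]
      exact hcs.2
    · rw [show phiF a c = c from if_neg hcs]
      rcases hcor with hnot | hspec
      · exact mem_SRs.2 ⟨hcL, Or.inl hnot⟩
      · exact absurd hspec hcs
  · intro hj
    obtain ⟨hjL, hjor⟩ := mem_SRs.1 hj
    rw [Finset.mem_image]
    rcases hjor with hnot | ⟨hj1, hrj, heven⟩
    · refine ⟨j, mem_SLs.2 ⟨hjL, Or.inl hnot⟩, ?_⟩
      have hns : ¬(j ∈ leftEnds (Mset a) ∧ Even (compF (Mset a) j).card) := by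
        rintro ⟨hle, _⟩
        exact hnot (mem_ActF.2 (Or.inl (mem_leftEnds.1 hle).1))
      exact if_neg hns
    · -- j - 1 is a right end with even component
      set r := j - 1 with hrdef
      obtain ⟨hIcc, hcard, hlmem, hcomp⟩ := rEnd_facts hrj
      set c := r + 1 - (compF (Mset a) r).card with hcdef
      have hcr : c ≤ r := by
        have : r ∈ compF (Mset a) r := mem_compF_self (mem_rEnds.1 hrj).1
        rw [hIcc] at this
        simp only [Finset.mem_Icc] at this
        omega
      have hevenc : Even (compF (Mset a) c).card := by rw [hcomp]; exact heven
      have hcs : c ∈ leftEnds (Mset a) ∧ Even (compF (Mset a) c).card := ⟨hlmem, hevenc⟩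
      refine ⟨c, mem_SLs.2 ⟨by omega, Or.inr hcs⟩, ?_⟩
      rw [show phiF a c = c + (compF (Mset a) c).card from if_pos hcs, hcomp]
      have hcardIcc : (compF (Mset a) r).card = r + 1 - c := by
        rw [hIcc, Nat.card_Icc]
      omega

/-- values are preserved: within an even component, the two endpoints agree. -/
lemma phiF_value (a : List ℕ) {c : ℕ} (hc : c ∈ SLs a) :
    a.getD (phiF a c) 0 = a.getD c 0 := by
  by_cases hcs : c ∈ leftEnds (Mset a) ∧ Even (compF (Mset a) c).card
  · obtain ⟨hphi, hIcc, hcard, hrmem, hcomp, hlt⟩ := special_facts hcs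
    set d := (compF (Mset a) c).card with hd
    obtain ⟨u, hu⟩ := hcs.2
    have key : ∀ v : ℕ, 2 * v ≤ d → a.getD (c + 2 * v) 0 = a.getD c 0 := by
      intro v
      induction v with
      | zero => intro _; norm_num
      | succ w ih =>
        intro hle
        have h1 : c + 2 * w ∈ Mset a := by
          apply compF_subset (Mset a) c
          rw [hIcc]
          simp only [Finset.mem_Icc]
          omega
        have h2 : c + 2 * w + 1 ∈ Mset a := by
          apply compF_subset (Mset a) c
          rw [hIcc]
          simp only [Finset.mem_Icc]
          omega
        have e1 := (mem_Mset.1 h1).2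
        have e2 := (mem_Mset.1 h2).2
        have ihw := ih (by omega)
        rw [show c + 2 * w + 1 + 1 = c + 2 * (w + 1) by omega] at e2
        rw [show c + 2 * w + 1 = c + 2 * w + 1 by rfl] at e1
        omega
    have := key u (by omega)
    rw [hphi, show c + d = c + 2 * u by omega]
    exact this
  · rw [show phiF a c = c from if_neg hcs]

/-! ### ω commutes with reversal -/

lemma omegaL_reverse (a : List ℕ) : omegaL a.reverse = (omegaL a).reverse := by
  have hSR : SRs a ⊆ Finset.range a.length := Finset.filter_subset _ _
  rw [omegaL_eq_sort, omegaL_eq_sort, SLs_reverse a]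
  rw [sort_image_anti (by
    intro x hx y hy hxy
    have hx' := Finset.mem_range.1 (hSR hx)
    have hy' := Finset.mem_range.1 (hSR hy)
    omega)]
  rw [List.map_reverse, List.map_map]
  rw [← phiF_image a, sort_image_mono (phiF_mono a), List.map_map]
  congr 1
  apply List.map_congr_left
  intro j hj
  have hj' : j ∈ SLs a := (Finset.mem_sort _).1 hj
  have hjL : j < a.length := (mem_SLs.1 hj').1
  have hphiL : phiF a j < a.length := by
    have : phiF a j ∈ SRs a := by
      rw [← phiF_image a]
      exact Finset.mem_image_of_mem _ hj'
    exact Finset.mem_range.1 (hSR this)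
  simp only [Function.comp_apply]
  rw [getD_reverse (by omega)]
  rw [show a.length - 1 - (a.length - 1 - phiF a j) = phiF a j by omega]
  exact phiF_value a hj'

end OHaraAux

namespace OHaraAux
open Finset OHara

lemma sigmaAux_nil (fuel : ℕ) : sigmaAux fuel [] = [] := by
  cases fuel <;> rfl

lemma sigmaAux_zero {a : List ℕ} (h : a ≠ []) : sigmaAux 0 a = [a.sum] := by
  cases a with
  | nil => exact absurd rfl h
  | cons x l => rfl

lemma sigmaAux_succ {fuel : ℕ} {a : List ℕ} (h : a ≠ []) :
    sigmaAux (fuel + 1) a =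
      if a.length ≤ 2 then [a.sum]
      else List.replicate (ecdL a - 1) 0 ++ [sprL a - sprL (omegaL a)]
        ++ sigmaAux fuel (omegaL a) := by
  cases a with
  | nil => exact absurd rfl h
  | cons x l => rfl

lemma sigmaAux_reverse (fuel : ℕ) : ∀ a : List ℕ, sigmaAux fuel a.reverse = sigmaAux fuel a := by
  induction fuel with
  | zero =>
    intro a
    cases a with
    | nil => rfl
    | cons x l =>
      have h1 : (x :: l).reverse ≠ [] := by simp
      rw [sigmaAux_zero h1, sigmaAux_zero (by simp), List.sum_reverse]
  | succ fuel ih =>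
    intro a
    cases a with
    | nil => rfl
    | cons x l =>
      set b := x :: l with hb
      have hbne : b ≠ [] := by simp [hb]
      have hrne : b.reverse ≠ [] := by simp [hb]
      rw [sigmaAux_succ hrne, sigmaAux_succ hbne, List.length_reverse, List.sum_reverse,
        ecdL_reverse, sprL_reverse, omegaL_reverse, sprL_reverse, ih (omegaL b)]

lemma sigmaL_reverse (a : List ℕ) : sigmaL a.reverse = sigmaL a := by
  rw [sigmaL, sigmaL, List.length_reverse, sigmaAux_reverse]


end OHaraAux

open OHara in
/-- The signature is invariant under the reversal involution `τ`; consequently each level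
set `Q_n(d_0, …, d_k)` of the signature map is stable under `τ`. -/
theorem sigma_tau_invariant (n m : ℕ)
    (a : List ℕ) (hlen : a.length = n + 1) (hsum : a.sum = m) :
    sigmaL a.reverse = sigmaL a ∧
    ∀ ds : List ℕ, ds.length = n / 2 + 1 → a ∈ Qset n ds → a.reverse ∈ Qset n ds := by
  refine ⟨OHaraAux.sigmaL_reverse a, ?_⟩
  rintro ds _ ⟨h1, h2, h3⟩
  exact ⟨by rw [List.length_reverse]; exact h1, by rw [List.sum_reverse]; exact h2,
    by rw [OHaraAux.sigmaL_reverse]; exact h3⟩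
end

section
/- Let n ≥ 1, m ≥ 0, 𝔞 = (a_0,…,a_n) ∈ A_n(m), and let i ∈ M(𝔞) satisfy a_{i+1} > 0, and additionally a_{i−1} < a_{i+1} in case i ≥ 1. Define 𝔞′ = (a_0,…,a_{i−1}, a_i + 1, a_{i+1} − 1, a_{i+2},…,a_n) (one step of the raising algorithm). Then spr(𝔞′) = spr(𝔞), i ∈ M(𝔞′), and ecd(𝔞′) = ecd(𝔞). -/
namespace OHaraAux
open Finset

/-- run length of `S` ending at `j` (0 if `j ∉ S`). -/
def rho (S : Finset ℕ) : ℕ → ℕ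
  | 0 => if 0 ∈ S then 1 else 0
  | j+1 => if j+1 ∈ S then rho S j + 1 else 0

lemma rho_succ (S : Finset ℕ) (j : ℕ) :
    rho S (j+1) = if j+1 ∈ S then rho S j + 1 else 0 := rfl

lemma rho_zero (S : Finset ℕ) : rho S 0 = if 0 ∈ S then 1 else 0 := rfl

lemma rho_eq_zero {S : Finset ℕ} {j : ℕ} (h : j ∉ S) : rho S j = 0 := by
  cases j <;> simp [rho_zero, rho_succ, h]

lemma rho_pos {S : Finset ℕ} {j : ℕ} (h : j ∈ S) : 1 ≤ rho S j := by
  cases j <;> simp [rho_zero, rho_succ, h]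

lemma rho_congr {S T : Finset ℕ} : ∀ j, (∀ k ≤ j, (k ∈ S ↔ k ∈ T)) → rho S j = rho T j := by
  intro j
  induction j with
  | zero => intro h; simp [rho_zero, h 0 le_rfl]
  | succ j ih =>
      intro h
      have h1 : (j+1 ∈ S) ↔ (j+1 ∈ T) := h (j+1) le_rfl
      have h2 : rho S j = rho T j := ih (fun k hk => h k (le_trans hk (Nat.le_succ j)))
      by_cases hm : j+1 ∈ S
      · rw [rho_succ, rho_succ, if_pos hm, if_pos (h1.mp hm), h2]
      · rw [rho_succ, rho_succ, if_neg hm, if_neg (fun c => hm (h1.mpr c))]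

lemma rho_facts (S : Finset ℕ) :
    ∀ j, rho S j ≤ j + 1 ∧ (∀ k, j + 1 - rho S j ≤ k → k ≤ j → k ∈ S) ∧
      (j ∈ S → (j + 1 - rho S j = 0 ∨ j - rho S j ∉ S)) := by
  intro j
  induction j with
  | zero =>
      refine ⟨?_, ?_, ?_⟩
      · by_cases h : 0 ∈ S <;> simp [rho_zero, h]
      · intro k hk hk0
        by_cases h : 0 ∈ S
        · interval_cases k
          · exact h
        · simp [rho_zero, h] at hk hk0; omega
      · intro h; left; simp [rho_zero, h]
  | succ j ih =>
      obtain ⟨ih1, ih2, ih3⟩ := ih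
      by_cases hm : j+1 ∈ S
      · have hr : rho S (j+1) = rho S j + 1 := by rw [rho_succ, if_pos hm]
        refine ⟨by omega, ?_, ?_⟩
        · intro k hk hk1
          rcases Nat.lt_or_ge k (j+1) with h | h
          · exact ih2 k (by omega) (by omega)
          · have : k = j + 1 := by omega
            subst this; exact hm
        · intro _
          rw [hr]
          by_cases hj : j ∈ S
          · rcases ih3 hj with h | h
            · left; omega
            · right
              have : j + 1 - (rho S j + 1) = j - rho S j := by omega
              rw [this]; exact h
          · have : rho S j = 0 := rho_eq_zero hj
            right
            have he : j + 1 - (rho S j + 1) = j := by omega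
            rw [he]; exact hj
      · have hr : rho S (j+1) = 0 := by rw [rho_succ, if_neg hm]
        refine ⟨by omega, ?_, ?_⟩
        · intro k hk hk1; rw [hr] at hk; omega
        · intro h; exact absurd h hm

lemma rho_of_leftEnd {S : Finset ℕ} {i : ℕ} (hi : i ∈ S) (h : i = 0 ∨ i - 1 ∉ S) :
    rho S i = 1 := by
  cases i with
  | zero => simp [rho_zero, hi]
  | succ k =>
      rcases h with h | h
      · omega
      · have : k ∉ S := by simpa using h
        rw [rho_succ, if_pos hi, rho_eq_zero this]

lemma rho_ge_of_run {S : Finset ℕ} {l : ℕ} :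
    ∀ m, l ≤ m → (∀ k, l ≤ k → k ≤ m → k ∈ S) → m + 1 - l ≤ rho S m := by
  intro m
  induction m with
  | zero =>
      intro h hrun
      have : 0 ∈ S := hrun 0 h le_rfl
      have := rho_pos this; omega
  | succ m ih =>
      intro h hrun
      have hm : m + 1 ∈ S := hrun (m+1) h le_rfl
      rw [rho_succ, if_pos hm]
      rcases Nat.lt_or_ge l (m+1) with h' | h'
      · have := ih (by omega) (fun k hk hk' => hrun k hk (by omega))
        omega
      · omega

open OHara

def ecdF (S : Finset ℕ) : ℕ := ∑ i ∈ leftEnds S, ((compF S i).card + 1) / 2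

lemma ecdL_eq (a : List ℕ) : ecdL a = ecdF (Mset a) := rfl

lemma compF_eq_Icc_s8 {S : Finset ℕ} {l r : ℕ} (hlr : l ≤ r)
    (hleft : l = 0 ∨ l - 1 ∉ S) (hrun : ∀ k, l ≤ k → k ≤ r → k ∈ S)
    (hright : r + 1 ∉ S) : compF S l = Finset.Icc l r := by
  ext k
  simp only [compF, mem_filter, mem_Icc]
  constructor
  · rintro ⟨hk, hsub⟩
    have hlk : l ≤ k := by
      by_contra h
      push_neg at h
      have hl1 : l - 1 ∈ Finset.Icc (min l k) (max l k) := by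
        simp [mem_Icc]; omega
      have := hsub hl1
      rcases hleft with h0 | h0
      · omega
      · exact h0 this
    constructor
    · exact hlk
    · by_contra h
      push_neg at h
      have : r + 1 ∈ Finset.Icc (min l k) (max l k) := by
        simp [mem_Icc]; omega
      exact hright (hsub this)
  · rintro ⟨h1, h2⟩
    refine ⟨hrun k h1 (by omega), ?_⟩
    intro x hx
    simp [mem_Icc] at hx
    exact hrun x (by omega) (by omega)

lemma compF_erase_of_ne {S : Finset ℕ} {M : ℕ} (hM : ∀ k ∈ S, k ≤ M) {j : ℕ}
    (hjM : j < M) (hMnot : M ∉ compF S j) : compF (S.erase M) j = compF S j := by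
  ext k
  simp only [compF, mem_filter, mem_erase]
  constructor
  · rintro ⟨⟨hkM, hk⟩, hsub⟩
    exact ⟨hk, fun x hx => (mem_erase.mp (hsub hx)).2⟩
  · rintro ⟨hk, hsub⟩
    have hkne : k ≠ M := by
      intro h; subst h
      exact hMnot (by simp [compF, mem_filter]; exact ⟨hk, hsub⟩)
    have hkM : k < M := lt_of_le_of_ne (hM k hk) hkne
    refine ⟨⟨hkne, hk⟩, ?_⟩
    intro x hx
    have hxS := hsub hx
    simp [mem_Icc] at hx
    have : x < M := by
      rcases max_cases j k with ⟨he, _⟩ | ⟨he, _⟩ <;> omega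
    exact mem_erase.mpr ⟨by omega, hxS⟩

lemma ecdF_erase_max {S : Finset ℕ} (hS : S.Nonempty) :
    ecdF S = ecdF (S.erase (S.max' hS)) + (if Odd (rho S (S.max' hS)) then 1 else 0) := by
  set M := S.max' hS with hMdef
  have hMS : M ∈ S := S.max'_mem hS
  have hMmax : ∀ k ∈ S, k ≤ M := fun k hk => S.le_max' k hk
  set c := rho S M with hcdef
  obtain ⟨hc1, hrun, hleft'⟩ := rho_facts S M
  have hcpos : 1 ≤ c := rho_pos hMS
  set l := M + 1 - c with hldef
  have hlM : l ≤ M := by omega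
  have hleft : l = 0 ∨ l - 1 ∉ S := by
    rcases hleft' hMS with h | h
    · left; omega
    · right; have : l - 1 = M - c := by omega
      rw [this]; exact h
  have hMnotS : M + 1 ∉ S := fun h => by have := hMmax _ h; omega
  have hcomp : compF S l = Finset.Icc l M :=
    compF_eq_Icc_s8 hlM hleft (fun k hk hk' => hrun k (by omega) hk') hMnotS
  have hlS : l ∈ S := hrun l (by omega) hlM
  have hlLE : l ∈ leftEnds S := by
    simp only [leftEnds, mem_filter]; exact ⟨hlS, hleft⟩
  have huniq : ∀ j ∈ leftEnds S, M ∈ compF S j → j = l := by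
    intro j hj hMc
    simp only [leftEnds, mem_filter] at hj
    obtain ⟨hjS, hjle⟩ := hj
    have hjM : j ≤ M := hMmax j hjS
    simp only [compF, mem_filter] at hMc
    have hsub := hMc.2
    have hrunj : ∀ k, j ≤ k → k ≤ M → k ∈ S := by
      intro k hk hk'
      apply hsub
      simp only [mem_Icc]
      constructor
      · exact le_trans (min_le_left _ _) hk
      · rcases max_cases j M with ⟨he, _⟩ | ⟨he, _⟩ <;> omega
    have := rho_ge_of_run M hjM hrunj
    have hjl : l ≤ j := by omega
    by_contra hne
    have hjl' : l < j := by omega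
    have hj1 : j - 1 ∈ S := hrun (j-1) (by omega) (by omega)
    rcases hjle with h | h
    · omega
    · exact h hj1
  by_cases hc : c = 1
  -- case c = 1 : l = M
  · have hlM' : l = M := by omega
    have hMLE : M ∈ leftEnds S := by rw [← hlM']; exact hlLE
    have hcompM : compF S M = {M} := by
      rw [← hlM', hcomp, hlM']; simp
    have hLE : leftEnds (S.erase M) = (leftEnds S).erase M := by
      ext j
      simp only [leftEnds, mem_filter, mem_erase]
      constructor
      · rintro ⟨⟨hjne, hjS⟩, hj⟩
        have hjM := hMmax j hjS
        refine ⟨hjne, hjS, ?_⟩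
        rcases hj with h | h
        · left; exact h
        · right; intro hx; exact h ⟨by omega, hx⟩
      · rintro ⟨hjne, hjS, hj⟩
        refine ⟨⟨hjne, hjS⟩, ?_⟩
        rcases hj with h | h
        · left; exact h
        · right; rintro ⟨-, hx⟩; exact h hx
    have hcompsame : ∀ j ∈ (leftEnds S).erase M, compF (S.erase M) j = compF S j := by
      intro j hj
      obtain ⟨hjne, hjLE⟩ := mem_erase.mp hj
      have hjS : j ∈ S := (mem_filter.mp hjLE).1
      have hjM : j < M := lt_of_le_of_ne (hMmax j hjS) hjne
      refine compF_erase_of_ne hMmax hjM ?_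
      intro hMc
      exact hjne ((huniq j hjLE hMc).trans hlM')
    have hrhoM : Odd c := by rw [hc]; exact odd_one
    have hsum : ∑ j ∈ (leftEnds S).erase M, (((compF (S.erase M) j).card + 1) / 2)
        = ∑ j ∈ (leftEnds S).erase M, (((compF S j).card + 1) / 2) :=
      Finset.sum_congr rfl (fun j hj => by rw [hcompsame j hj])
    rw [ecdF, ecdF, hLE, hsum, ← Finset.add_sum_erase _ _ hMLE, hcompM, if_pos hrhoM]
    simp only [Finset.card_singleton]
    omega
  -- case c ≥ 2
  · have hc2 : 2 ≤ c := by omega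
    have hM1 : 1 ≤ M := by omega
    have hM1S : M - 1 ∈ S := hrun (M-1) (by omega) (by omega)
    have hMnotLE : M ∉ leftEnds S := by
      simp only [leftEnds, mem_filter]
      rintro ⟨-, h | h⟩
      · omega
      · exact h hM1S
    have hLE : leftEnds (S.erase M) = leftEnds S := by
      ext j
      simp only [leftEnds, mem_filter, mem_erase]
      constructor
      · rintro ⟨⟨hjne, hjS⟩, hj⟩
        have hjM := hMmax j hjS
        refine ⟨hjS, ?_⟩
        rcases hj with h | h
        · left; exact h
        · right; intro hx; exact h ⟨by omega, hx⟩
      · rintro ⟨hjS, hj⟩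
        have hjne : j ≠ M := by
          intro h; subst h
          exact hMnotLE (by simp only [leftEnds, mem_filter]; exact ⟨hjS, hj⟩)
        refine ⟨⟨hjne, hjS⟩, ?_⟩
        rcases hj with h | h
        · left; exact h
        · right; rintro ⟨-, hx⟩; exact h hx
    have hcompl' : compF (S.erase M) l = Finset.Icc l (M-1) := by
      apply compF_eq_Icc_s8 (by omega)
      · rcases hleft with h | h
        · left; exact h
        · right; rintro hx; exact h (mem_erase.mp hx).2
      · intro k hk hk'
        exact mem_erase.mpr ⟨by omega, hrun k (by omega) (by omega)⟩
      · have h0 : M - 1 + 1 = M := by omega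
        rw [h0]; simp
    have hcompsame : ∀ j ∈ (leftEnds S).erase l, compF (S.erase M) j = compF S j := by
      intro j hj
      obtain ⟨hjne, hjLE⟩ := mem_erase.mp hj
      have hjS : j ∈ S := (mem_filter.mp hjLE).1
      have hjneM : j ≠ M := fun h => hMnotLE (h ▸ hjLE)
      have hjM : j < M := lt_of_le_of_ne (hMmax j hjS) hjneM
      refine compF_erase_of_ne hMmax hjM ?_
      intro hMc
      exact hjne (huniq j hjLE hMc)
    have hcard1 : (compF S l).card = c := by
      rw [hcomp, Nat.card_Icc]; omega
    have hcard2 : (compF (S.erase M) l).card = c - 1 := by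
      rw [hcompl', Nat.card_Icc]; omega
    have hsum : ∑ j ∈ (leftEnds S).erase l, (((compF (S.erase M) j).card + 1) / 2)
        = ∑ j ∈ (leftEnds S).erase l, (((compF S j).card + 1) / 2) :=
      Finset.sum_congr rfl (fun j hj => by rw [hcompsame j hj])
    rw [ecdF, ecdF, hLE, ← Finset.add_sum_erase _ _ hlLE, ← Finset.add_sum_erase _ _ hlLE,
      hsum, hcard1, hcard2]
    rcases Nat.even_or_odd c with ⟨t, ht⟩ | ⟨t, ht⟩
    · rw [if_neg (by rw [Nat.odd_iff]; omega)]; omega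
    · rw [if_pos ⟨t, ht⟩]; omega

lemma ite_odd_add (t : ℕ) :
    (if Odd t then (1:ℕ) else 0) + (if Odd (t+1) then 1 else 0) = 1 := by
  rcases Nat.even_or_odd t with h | h
  · rw [if_neg (by simpa [Nat.not_odd_iff_even] using h), if_pos (Even.add_one h)]
  · rw [if_pos h, if_neg (by simpa [Nat.not_odd_iff_even] using Odd.add_one h)]

lemma ecdF_eq_sum {N : ℕ} (S : Finset ℕ) (hN : ∀ j ∈ S, j < N) :
    ecdF S = ∑ j ∈ Finset.range N, (if Odd (rho S j) then 1 else 0) := by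
  induction S using Finset.strongInduction with
  | _ S ih =>
    rcases S.eq_empty_or_nonempty with rfl | hS
    · rw [show ecdF ∅ = 0 from by simp [ecdF, leftEnds]]
      symm
      apply Finset.sum_eq_zero
      intro j hj
      rw [rho_eq_zero (Finset.notMem_empty j)]
      simp
    · set M := S.max' hS with hMdef
      have hMS : M ∈ S := S.max'_mem hS
      have hMmax : ∀ k ∈ S, k ≤ M := fun k hk => S.le_max' k hk
      have hMN : M ∈ Finset.range N := mem_range.mpr (hN M hMS)
      have hsub : S.erase M ⊂ S := Finset.erase_ssubset hMS
      have hN' : ∀ j ∈ S.erase M, j < N := fun j hj => hN j (mem_of_mem_erase hj)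
      have hrec := ecdF_erase_max hS
      rw [← hMdef] at hrec
      have hih := ih (S.erase M) hsub hN'
      have hpt : ∀ j ∈ (Finset.range N).erase M,
          (if Odd (rho S j) then 1 else 0) = (if Odd (rho (S.erase M) j) then 1 else 0) := by
        intro j hj
        obtain ⟨hjne, _⟩ := mem_erase.mp hj
        rcases Nat.lt_or_ge j M with h | h
        · have : rho S j = rho (S.erase M) j := by
            apply rho_congr
            intro k hk
            have : k ≠ M := by omega
            simp [mem_erase, this]
          rw [this]
        · have hjM : M < j := by omega
          have h1 : j ∉ S := fun hc => by have := hMmax j hc; omega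
          have h2 : j ∉ S.erase M := fun hc => h1 (mem_of_mem_erase hc)
          rw [rho_eq_zero h1, rho_eq_zero h2]
      have hM0 : rho (S.erase M) M = 0 := rho_eq_zero (Finset.notMem_erase M S)
      rw [hrec, hih]
      rw [← Finset.add_sum_erase _ _ hMN, ← Finset.add_sum_erase _ (fun j => if Odd (rho S j) then 1 else 0) hMN]
      rw [Finset.sum_congr rfl hpt, hM0]
      have h0 : (if Odd 0 then (1:ℕ) else 0) = 0 := by simp [Nat.odd_iff]
      rw [h0]
      omega

/-- erasing `i+1` when `i` is a left end of `S` preserves run-length parity pointwise. -/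
lemma rho_erase_parity {S : Finset ℕ} {i : ℕ} (hi : i ∈ S) (hle : i = 0 ∨ i - 1 ∉ S)
    (j : ℕ) : Odd (rho (S.erase (i+1)) j) ↔ Odd (rho S j) := by
  set T := S.erase (i+1) with hT
  have key : ∀ j, rho S j = rho T j ∨ rho S j = rho T j + 2 := by
    intro j
    induction j with
    | zero =>
        left
        apply rho_congr
        intro k hk
        have : k ≠ i + 1 := by omega
        simp [hT, mem_erase, this]
    | succ j ihj =>
        by_cases hji : j + 1 = i + 1
        · have hji' : j = i := by omega
          subst hji'
          have hT1 : j + 1 ∉ T := Finset.notMem_erase _ _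
          rw [rho_succ, rho_succ, if_neg hT1]
          by_cases hjs : j + 1 ∈ S
          · rw [if_pos hjs, rho_of_leftEnd hi hle]
            right; rfl
          · rw [if_neg hjs]; left; rfl
        · have hmem : (j + 1 ∈ S) ↔ (j + 1 ∈ T) := by
            simp [hT, mem_erase, hji, show j ≠ i by omega]
          rw [rho_succ, rho_succ]
          by_cases hjs : j + 1 ∈ S
          · rw [if_pos hjs, if_pos (hmem.mp hjs)]
            rcases ihj with h | h
            · left; omega
            · right; omega
          · rw [if_neg hjs, if_neg (fun hc => hjs (hmem.mpr hc))]
            left; rfl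
  rcases key j with h | h <;> rw [h] <;> simp [Nat.odd_iff] <;> omega

/-- inserting `i-1` when `i ∈ S` is isolated preserves the parity-count. -/
lemma sum_rho_insert {S : Finset ℕ} {i N : ℕ} (h1 : 1 ≤ i) (hiS : i ∈ S)
    (hm : i - 1 ∉ S) (hp : i + 1 ∉ S) (hiN : i < N) :
    ∑ j ∈ Finset.range N, (if Odd (rho (insert (i-1) S) j) then 1 else 0)
      = ∑ j ∈ Finset.range N, (if Odd (rho S j) then 1 else 0) := by
  set T := insert (i-1) S with hT
  have hlow : ∀ j, j < i - 1 → rho T j = rho S j := by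
    intro j hj
    apply rho_congr
    intro k hk
    have h1 : k ≠ i - 1 := by omega
    have h2 : k ≠ i := by omega  -- k ≤ j < i-1 < i
    simp [hT, mem_insert, h1]
  have hSm1 : rho S (i-1) = 0 := rho_eq_zero hm
  have hSi : rho S i = 1 := rho_of_leftEnd hiS (Or.inr hm)
  have hTm1pos : i - 1 ∈ T := mem_insert_self _ _
  set t := rho T (i-1) with ht
  have hTi : rho T i = t + 1 := by
    have hiT : i ∈ T := mem_insert_of_mem hiS
    have h0 : i - 1 + 1 = i := by omega
    calc rho T i = rho T ((i-1)+1) := by rw [h0]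
    _ = t + 1 := by rw [rho_succ, h0, if_pos hiT]
  have hhigh : ∀ d, rho T (i+1+d) = rho S (i+1+d) := by
    intro d
    induction d with
    | zero =>
        have hpT : i + 1 ∉ T := by
          simp only [hT, mem_insert]
          rintro (h | h)
          · omega
          · exact hp h
        rw [show i+1+0 = i+1 from rfl, rho_eq_zero hpT, rho_eq_zero hp]
    | succ d ihd =>
        have he : i + 1 + (d+1) = (i+1+d) + 1 := by omega
        rw [he, rho_succ, rho_succ]
        have hne : i + 1 + d + 1 ≠ i - 1 := by omega
        have hmem : (i+1+d+1 ∈ T) ↔ (i+1+d+1 ∈ S) := by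
          simp [hT, mem_insert, hne]
        by_cases hc : i+1+d+1 ∈ S
        · rw [if_pos hc, if_pos (hmem.mpr hc), ihd]
        · rw [if_neg hc, if_neg (fun hx => hc (hmem.mp hx))]
  have hpt : ∀ j ∈ ((Finset.range N).erase (i-1)).erase i,
      (if Odd (rho T j) then 1 else 0) = (if Odd (rho S j) then 1 else 0) := by
    intro j hj
    obtain ⟨hji, hj'⟩ := mem_erase.mp hj
    obtain ⟨hjm, _⟩ := mem_erase.mp hj'
    rcases Nat.lt_or_ge j (i-1) with h | h
    · rw [hlow j h]
    · have : i + 1 ≤ j := by omega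
      obtain ⟨d, rfl⟩ := Nat.exists_eq_add_of_le this
      rw [hhigh d]
  have hm1N : i - 1 ∈ Finset.range N := mem_range.mpr (by omega)
  have hiN' : i ∈ (Finset.range N).erase (i-1) :=
    mem_erase.mpr ⟨by omega, mem_range.mpr hiN⟩
  rw [← Finset.add_sum_erase _ _ hm1N, ← Finset.add_sum_erase _ _ hiN',
    ← Finset.add_sum_erase _ (fun j => if Odd (rho S j) then 1 else 0) hm1N,
    ← Finset.add_sum_erase _ (fun j => if Odd (rho S j) then 1 else 0) hiN',
    Finset.sum_congr rfl hpt, hSm1, hSi, hTi, ← ht]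
  have e1 := ite_odd_add t
  have e2 : (if Odd 0 then (1:ℕ) else 0) = 0 := by simp [Nat.odd_iff]
  have e3 : (if Odd 1 then (1:ℕ) else 0) = 1 := by simp [Nat.odd_iff]
  rw [e2, e3]
  omega

end OHaraAux

open OHara in
/-- One step of the raising algorithm preserves the spread, keeps `i` a maximal-pair index,
and preserves the degree. -/
theorem raising_step_preserves_spr_ecd (n m : ℕ) (hn : 1 ≤ n)
    (a : List ℕ) (hlen : a.length = n + 1) (hsum : a.sum = m)
    (i : ℕ) (hi : i ∈ Mset a) (hpos : 0 < a.getD (i + 1) 0)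
    (hlt : 1 ≤ i → a.getD (i - 1) 0 < a.getD (i + 1) 0)
    (a' : List ℕ)
    (ha' : a' = (a.set i (a.getD i 0 + 1)).set (i + 1) (a.getD (i + 1) 0 - 1)) :
    sprL a' = sprL a ∧ i ∈ Mset a' ∧ ecdL a' = ecdL a := by
  -- notation
  classical
  have hiR := hi
  simp only [Mset, Finset.mem_filter, Finset.mem_range] at hiR
  obtain ⟨hi1, hi2⟩ := hiR
  set K := sprL a with hK
  have hilen : i + 1 < a.length := by omega
  have hlen2 : a'.length = a.length := by rw [ha']; simp
  have key : ∀ j, a'.getD j 0 =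
      if j = i then a.getD i 0 + 1 else if j = i + 1 then a.getD (i+1) 0 - 1
      else a.getD j 0 := by
    intro j
    subst ha'
    have hsl : (a.set i (a.getD i 0 + 1)).length = a.length := by simp
    by_cases h1 : j = i + 1
    · subst h1
      rw [if_neg (by omega), if_pos rfl]
      have hl : i + 1 < (a.set i (a.getD i 0 + 1)).length := by omega
      simp [List.getD_eq_getElem?_getD, List.getElem?_set_self', hl,
        List.getElem?_set_ne (show i ≠ i + 1 by omega),
        List.getElem?_eq_getElem hilen]
    · by_cases h2 : j = i
      · subst h2
        rw [if_pos rfl]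
        have hl : j < a.length := by omega
        simp [List.getD_eq_getElem?_getD, List.getElem?_set_ne (show j + 1 ≠ j by omega),
          List.getElem?_set_self', hl]
      · rw [if_neg h2, if_neg h1]
        simp [List.getD_eq_getElem?_getD,
          List.getElem?_set_ne (show i + 1 ≠ j from fun hc => h1 hc.symm),
          List.getElem?_set_ne (show i ≠ j from fun hc => h2 hc.symm)]
  have hsup : ∀ j, j < a.length - 1 → a.getD j 0 + a.getD (j+1) 0 ≤ K := by
    intro j hj
    rw [hK]
    exact Finset.le_sup (f := fun j => a.getD j 0 + a.getD (j+1) 0)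
      (Finset.mem_range.mpr hj)
  have hKi : a'.getD i 0 + a'.getD (i+1) 0 = K := by
    rw [key i, key (i+1), if_pos rfl, if_neg (by omega), if_pos rfl]
    omega
  have hsprle : sprL a' ≤ K := by
    apply Finset.sup_le
    intro j hj
    rw [hlen2] at hj
    have hjlt : j < a.length - 1 := Finset.mem_range.mp hj
    by_cases hji : j = i
    · subst hji; rw [hKi]
    · by_cases hji1 : j + 1 = i
      · have h1 : 1 ≤ i := by omega
        have hl := hlt h1
        rw [key j, key (j+1), if_neg hji, if_neg (by omega), if_pos hji1]
        have hji1' : i - 1 = j := by omega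
        rw [hji1'] at hl
        rw [← hji1] at hi2 hl ⊢
        omega
      · by_cases hji2 : j = i + 1
        · subst hji2
          have h := hsup (i+1) hjlt
          rw [key (i+1), key (i+2), if_neg (by omega), if_pos rfl, if_neg (by omega),
            if_neg (by omega)]
          have he2 : i + 1 + 1 = i + 2 := by omega
          rw [he2] at h
          omega
        · rw [key j, key (j+1), if_neg hji, if_neg hji2, if_neg (by omega),
            if_neg (by omega)]
          exact hsup j hjlt
  have hspr : sprL a' = K := by
    apply le_antisymm hsprle
    calc K = a'.getD i 0 + a'.getD (i+1) 0 := hKi.symm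
    _ ≤ sprL a' := Finset.le_sup (f := fun j => a'.getD j 0 + a'.getD (j+1) 0)
        (Finset.mem_range.mpr (by omega))
  have hMa' : ∀ j, (j ∈ Mset a' ↔ (j < a.length - 1 ∧ a'.getD j 0 + a'.getD (j+1) 0 = K)) := by
    intro j
    simp [Mset, Finset.mem_filter, Finset.mem_range, hspr, hlen2]
  have hmemS : ∀ j, j ∈ Mset a ↔ (j < a.length - 1 ∧ a.getD j 0 + a.getD (j+1) 0 = K) := by
    intro j
    simp [Mset, Finset.mem_filter, Finset.mem_range, hK]
  have hSleft : i = 0 ∨ i - 1 ∉ Mset a := by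
    rcases Nat.eq_zero_or_pos i with h0 | h0
    · left; exact h0
    · right
      intro hc
      obtain ⟨-, hc2⟩ := (hmemS (i-1)).mp hc
      have he : i - 1 + 1 = i := by omega
      rw [he] at hc2
      have := hlt h0
      omega
  have hiM' : i ∈ Mset a' := (hMa' i).mpr ⟨hi1, hKi⟩
  refine ⟨by rw [hspr, hK], hiM', ?_⟩
  -- degree preservation
  have hnotip1 : ∀ j, j = i + 1 → j ∉ Mset a' := by
    rintro j rfl hc
    obtain ⟨hc1, hc2⟩ := (hMa' (i+1)).mp hc
    rw [key (i+1), key (i+2), if_neg (by omega), if_pos rfl, if_neg (by omega),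
      if_neg (by omega)] at hc2
    have h := hsup (i+1) hc1
    have he2 : i + 1 + 1 = i + 2 := by omega
    rw [he2] at h
    omega
  have hbound : ∀ j ∈ Mset a, j < a.length := by
    intro j hj; have := ((hmemS j).mp hj).1; omega
  have hbound' : ∀ j ∈ Mset a', j < a.length := by
    intro j hj; have := ((hMa' j).mp hj).1; omega
  rw [OHaraAux.ecdL_eq, OHaraAux.ecdL_eq,
    OHaraAux.ecdF_eq_sum (N := a.length) _ hbound',
    OHaraAux.ecdF_eq_sum (N := a.length) _ hbound]
  have hErase : ∑ j ∈ Finset.range a.length,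
        (if Odd (OHaraAux.rho ((Mset a).erase (i+1)) j) then 1 else 0)
      = ∑ j ∈ Finset.range a.length, (if Odd (OHaraAux.rho (Mset a) j) then 1 else 0) :=
    Finset.sum_congr rfl (fun j _ =>
      if_congr (OHaraAux.rho_erase_parity hi hSleft j) rfl rfl)
  by_cases hp : 1 ≤ i ∧ a.getD (i-1) 0 + a.getD i 0 + 1 = K
  · -- i-1 becomes a new maximal index
    obtain ⟨hp1, hp2⟩ := hp
    have hm1S : i - 1 ∉ Mset a := by
      rcases hSleft with h | h
      · omega
      · exact h
    have hT : Mset a' = insert (i-1) ((Mset a).erase (i+1)) := by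
      ext j
      rw [hMa' j]
      simp only [Finset.mem_insert, Finset.mem_erase, hmemS]
      by_cases hj1 : j = i + 1
      · subst hj1
        constructor
        · intro hc
          exact absurd ((hMa' (i+1)).mpr hc) (hnotip1 (i+1) rfl)
        · rintro (h | ⟨h, -⟩) <;> omega
      · by_cases hj2 : j = i - 1
        · subst hj2
          constructor
          · intro _; left; rfl
          · intro _
            refine ⟨by omega, ?_⟩
            rw [key (i-1), key (i-1+1), if_neg (by omega), if_neg (by omega)]
            have he : i - 1 + 1 = i := by omega
            rw [he, if_pos rfl]
            omega
        · by_cases hj3 : j = i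
          · rw [hj3]
            constructor
            · intro _
              right
              exact ⟨by omega, (hmemS i).mp hi⟩
            · intro _
              exact ⟨hi1, hKi⟩
          · have hk1 : a'.getD j 0 = a.getD j 0 := by
              rw [key j, if_neg hj3, if_neg hj1]
            have hk2 : a'.getD (j+1) 0 = a.getD (j+1) 0 := by
              rw [key (j+1), if_neg (by omega), if_neg (by omega)]
            rw [hk1, hk2]
            constructor
            · intro hc; right; exact ⟨hj1, hc⟩
            · rintro (h | ⟨-, h⟩)
              · omega
              · exact h
    rw [hT]
    have hiE : i ∈ (Mset a).erase (i+1) :=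
      Finset.mem_erase.mpr ⟨by omega, hi⟩
    have hm1E : i - 1 ∉ (Mset a).erase (i+1) := fun hc =>
      hm1S (Finset.mem_of_mem_erase hc)
    have hp1E : i + 1 ∉ (Mset a).erase (i+1) := Finset.notMem_erase _ _
    rw [OHaraAux.sum_rho_insert hp1 hiE hm1E hp1E (by omega), hErase]
  · -- no new maximal index
    have hT : Mset a' = (Mset a).erase (i+1) := by
      ext j
      rw [hMa' j]
      simp only [Finset.mem_erase, hmemS]
      by_cases hj1 : j = i + 1
      · subst hj1
        constructor
        · intro hc
          exact absurd ((hMa' (i+1)).mpr hc) (hnotip1 (i+1) rfl)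
        · rintro ⟨h, -⟩; omega
      · by_cases hj2 : 1 ≤ i ∧ j = i - 1
        · obtain ⟨hi0, hj2⟩ := hj2
          subst hj2
          constructor
          · rintro ⟨h1, h2⟩
            rw [key (i-1), key (i-1+1), if_neg (by omega), if_neg (by omega)] at h2
            have he : i - 1 + 1 = i := by omega
            rw [he, if_pos rfl] at h2
            exact absurd ⟨hi0, by omega⟩ hp
          · rintro ⟨-, h⟩
            rcases hSleft with h0 | h0
            · omega
            · exact absurd ((hmemS (i-1)).mpr h) h0
        · by_cases hj3 : j = i
          · rw [hj3]
            constructor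
            · intro _
              exact ⟨by omega, (hmemS i).mp hi⟩
            · intro _
              exact ⟨hi1, hKi⟩
          · have hji : j ≠ i - 1 ∨ i = 0 := by
              rcases Nat.eq_zero_or_pos i with h | h
              · right; exact h
              · left; intro hc; exact hj2 ⟨h, hc⟩
            have hj1' : j + 1 ≠ i := by
              intro hc
              rcases hji with h | h
              · apply h; omega
              · omega
            have hk1 : a'.getD j 0 = a.getD j 0 := by
              rw [key j, if_neg hj3, if_neg hj1]
            have hk2 : a'.getD (j+1) 0 = a.getD (j+1) 0 := by
              rw [key (j+1), if_neg hj1', if_neg (by omega)]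
            rw [hk1, hk2]
            constructor
            · intro hc; exact ⟨hj1, hc⟩
            · rintro ⟨-, h⟩; exact h
    rw [hT, hErase]
end
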